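/- arXiv:2312.02294 — 5 statements merged into one kernel-verified Lean document; each statement's English description precedes it below -/
import Mathlib

section
/- Let L > 0 and fix α, β with 0 < |α| < 1 and β > 0. Let u : [0,L]² → ℝ be of class C³ and satisfy the boundary conditions u(0,y) = u(L,y) = 0, u_x(L,y) = α u_x(0,y) for all y ∈ [0,L], and u_y(x,L) = β u_x(x,L), u_y(x,0) = 0 for all x ∈ [0,L]. Then ∫_Ω u(x,y) · ( −u_x(x,y) − u_xxx(x,y) − (∂ₓ⁻¹ u_yy)(x,y) ) dx dy = −((1−α²)/2) ∫₀^L u_x(0,y)² dy − β ∫₀^L u(x,L)² dx − ½ ∫₀^L ((∂ₓ⁻¹ u_y)(0,y))² dy; in particular this quantity is ≤ 0. -/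
open MeasureTheory Real

noncomputable section

/-- Partial derivative in `x` of `u(x,y)`. -/
def pdx (u : ℝ → ℝ → ℝ) (x y : ℝ) : ℝ := deriv (fun x' => u x' y) x

/-- Third partial derivative in `x` of `u(x,y)`. -/
def pdx3 (u : ℝ → ℝ → ℝ) (x y : ℝ) : ℝ := iteratedDeriv 3 (fun x' => u x' y) x

/-- Partial derivative in `y` of `u(x,y)`. -/
def pdy (u : ℝ → ℝ → ℝ) (x y : ℝ) : ℝ := deriv (fun y' => u x y') y

/-- Second partial derivative in `y` of `u(x,y)`. -/
def pdy2 (u : ℝ → ℝ → ℝ) (x y : ℝ) : ℝ := iteratedDeriv 2 (fun y' => u x y') y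

/-- The nonlocal operator `(∂ₓ⁻¹ w)(x,y) = -∫ₓ^L w(s,y) ds`. -/
def pxInv (L : ℝ) (w : ℝ → ℝ → ℝ) (x y : ℝ) : ℝ := -(∫ s in x..L, w s y)

/-- The adjoint nonlocal operator `((∂ₓ⁻¹)* w)(x,y) = ∫₀^x w(s,y) ds`. -/
def pxInvStar (w : ℝ → ℝ → ℝ) (x y : ℝ) : ℝ := ∫ s in (0:ℝ)..x, w s y

lemma swap_core {f : ℝ → ℝ → ℝ} (hf : Continuous (Function.uncurry f))
    {a b c d : ℝ} (hab : a ≤ b) (hcd : c ≤ d) :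
    (∫ x in a..b, ∫ y in c..d, f x y) = ∫ y in c..d, ∫ x in a..b, f x y := by
  simp only [intervalIntegral.integral_of_le hab, intervalIntegral.integral_of_le hcd]
  apply MeasureTheory.integral_integral_swap
  rw [Measure.prod_restrict]
  have h1 : IntegrableOn (Function.uncurry f) (Set.Icc a b ×ˢ Set.Icc c d) :=
    hf.continuousOn.integrableOn_compact (isCompact_Icc.prod isCompact_Icc)
  exact h1.mono_set (Set.prod_mono Set.Ioc_subset_Icc_self Set.Ioc_subset_Icc_self)

lemma my_swap {f : ℝ → ℝ → ℝ} (hf : Continuous (Function.uncurry f)) (a b c d : ℝ) :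
    (∫ x in a..b, ∫ y in c..d, f x y) = ∫ y in c..d, ∫ x in a..b, f x y := by
  rcases le_total a b with hab | hab <;> rcases le_total c d with hcd | hcd
  · exact swap_core hf hab hcd
  · simp only [intervalIntegral.integral_symm d c]
    rw [intervalIntegral.integral_neg]
    exact congrArg Neg.neg (swap_core hf hab hcd)
  · simp only [intervalIntegral.integral_symm b a]
    rw [intervalIntegral.integral_neg]
    exact congrArg Neg.neg (swap_core hf hab hcd)
  · simp only [intervalIntegral.integral_symm b a, intervalIntegral.integral_symm d c,
      intervalIntegral.integral_neg, neg_neg]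
    exact swap_core hf hab hcd

lemma hasDerivAt_primitive {g : ℝ → ℝ} (hg : Continuous g) (a x : ℝ) :
    HasDerivAt (fun b => ∫ t in a..b, g t) (g x) x :=
  intervalIntegral.integral_hasDerivAt_right (hg.intervalIntegrable a x)
    (hg.stronglyMeasurableAtFilter _ _) hg.continuousAt

lemma hasDerivAt_slice_x {f : ℝ × ℝ → ℝ} (hf : Differentiable ℝ f) (x y : ℝ) :
    HasDerivAt (fun x' => f (x', y)) (fderiv ℝ f (x, y) (1, 0)) x := by
  have h2 : HasDerivAt (fun x' : ℝ => ((x' : ℝ), y)) ((1 : ℝ), (0 : ℝ)) x :=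
    (hasDerivAt_id x).prodMk (hasDerivAt_const x y)
  exact (hf (x, y)).hasFDerivAt.comp_hasDerivAt x h2

lemma hasDerivAt_slice_y {f : ℝ × ℝ → ℝ} (hf : Differentiable ℝ f) (x y : ℝ) :
    HasDerivAt (fun y' => f (x, y')) (fderiv ℝ f (x, y) (0, 1)) y := by
  have h2 : HasDerivAt (fun y' : ℝ => ((x : ℝ), y')) ((0 : ℝ), (1 : ℝ)) y :=
    (hasDerivAt_const y x).prodMk (hasDerivAt_id y)
  exact (hf (x, y)).hasFDerivAt.comp_hasDerivAt y h2

def Dx (f : ℝ × ℝ → ℝ) : ℝ × ℝ → ℝ := fun p => fderiv ℝ f p (1, 0)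
def Dy (f : ℝ × ℝ → ℝ) : ℝ × ℝ → ℝ := fun p => fderiv ℝ f p (0, 1)

lemma contDiff_Dx {n m : WithTop ℕ∞} {f : ℝ × ℝ → ℝ} (hf : ContDiff ℝ n f) (h : m + 1 ≤ n) :
    ContDiff ℝ m (Dx f) :=
  (hf.fderiv_right h).clm_apply contDiff_const

lemma contDiff_Dy {n m : WithTop ℕ∞} {f : ℝ × ℝ → ℝ} (hf : ContDiff ℝ n f) (h : m + 1 ≤ n) :
    ContDiff ℝ m (Dy f) :=
  (hf.fderiv_right h).clm_apply contDiff_const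

lemma contSliceX {g : ℝ → ℝ → ℝ} (hg : Continuous fun p : ℝ × ℝ => g p.1 p.2) (y : ℝ) :
    Continuous fun s => g s y :=
  hg.comp (continuous_id.prodMk continuous_const)

lemma contSliceY {g : ℝ → ℝ → ℝ} (hg : Continuous fun p : ℝ × ℝ => g p.1 p.2) (x : ℝ) :
    Continuous fun t => g x t :=
  hg.comp (continuous_const.prodMk continuous_id)

lemma contUncurry {g : ℝ → ℝ → ℝ} (hg : Continuous fun p : ℝ × ℝ => g p.1 p.2) :
    Continuous (Function.uncurry g) := hg

lemma cont_comp23 {g : ℝ → ℝ → ℝ} (hg : Continuous fun p : ℝ × ℝ => g p.1 p.2) :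
    Continuous fun q : (ℝ × ℝ) × ℝ => g q.2 q.1.2 :=
  hg.comp (continuous_snd.prodMk continuous_fst.snd)

/-- joint continuity of the primitive `(x,y) ↦ ∫_a^x g(t,y) dt` -/
lemma contPrimitive {g : ℝ → ℝ → ℝ} (hg : Continuous fun p : ℝ × ℝ => g p.1 p.2) (a : ℝ) :
    Continuous fun p : ℝ × ℝ => ∫ t in a..p.1, g t p.2 := by
  have hf : Continuous (Function.uncurry fun (p : ℝ × ℝ) (t : ℝ) => g t p.2) := by
    have h2 : Continuous fun q : (ℝ × ℝ) × ℝ => g q.2 q.1.2 := cont_comp23 hg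
    exact h2
  exact intervalIntegral.continuous_parametric_intervalIntegral_of_continuous (μ := volume)
    hf continuous_fst

lemma contParamInt {g : ℝ → ℝ → ℝ} (hg : Continuous fun p : ℝ × ℝ => g p.1 p.2) (a b : ℝ) :
    Continuous fun x => ∫ t in a..b, g x t :=
  intervalIntegral.continuous_parametric_intervalIntegral_of_continuous' (contUncurry hg) a b

set_option maxHeartbeats 1000000 in
/-- Dissipativity of the linearized KP-II operator `A u = -u_x - u_xxx - ∂ₓ⁻¹ u_yy`
under the closed-loop boundary conditions:
`∫_Ω u · Au = -((1-α²)/2) ∫₀^L u_x(0,y)² dy - β ∫₀^L u(x,L)² dx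
  - ½ ∫₀^L ((∂ₓ⁻¹ u_y)(0,y))² dy ≤ 0`. -/
theorem kp_operator_dissipative (L α β : ℝ) (hL : 0 < L)
    (hα0 : 0 < |α|) (hα1 : |α| < 1) (hβ : 0 < β)
    (u : ℝ → ℝ → ℝ) (hu : ContDiff ℝ 3 (fun p : ℝ × ℝ => u p.1 p.2))
    (hbx : ∀ y ∈ Set.Icc (0:ℝ) L, u 0 y = 0 ∧ u L y = 0 ∧ pdx u L y = α * pdx u 0 y)
    (hby : ∀ x ∈ Set.Icc (0:ℝ) L, pdy u x L = β * pdx u x L ∧ pdy u x 0 = 0) :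
    (∫ x in (0:ℝ)..L, ∫ y in (0:ℝ)..L,
        u x y * (-(pdx u x y) - pdx3 u x y - pxInv L (pdy2 u) x y))
      = -((1 - α^2)/2) * (∫ y in (0:ℝ)..L, (pdx u 0 y)^2)
        - β * (∫ x in (0:ℝ)..L, (u x L)^2)
        - (1/2) * (∫ y in (0:ℝ)..L, (pxInv L (pdy u) 0 y)^2) ∧
    (∫ x in (0:ℝ)..L, ∫ y in (0:ℝ)..L,
        u x y * (-(pdx u x y) - pdx3 u x y - pxInv L (pdy2 u) x y)) ≤ 0 := by
  set U : ℝ × ℝ → ℝ := fun p => u p.1 p.2 with hUdef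
  have hD1 : Differentiable ℝ U := hu.differentiable (by norm_num)
  have cU : Continuous U := hu.continuous
  have hDxU : ContDiff ℝ 2 (Dx U) := contDiff_Dx hu (by norm_num)
  have hDxxU : ContDiff ℝ 1 (Dx (Dx U)) := contDiff_Dx hDxU (by norm_num)
  have cDx : Continuous (Dx U) := hDxU.continuous
  have cDxxx : Continuous (Dx (Dx (Dx U))) :=
    (contDiff_Dx hDxxU (by norm_num) : ContDiff ℝ 0 _).continuous
  have hDyU : ContDiff ℝ 2 (Dy U) := contDiff_Dy hu (by norm_num)
  have cDy : Continuous (Dy U) := hDyU.continuous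
  have cDyy : Continuous (Dy (Dy U)) :=
    (contDiff_Dy hDyU (by norm_num) : ContDiff ℝ 1 _).continuous
  -- slice derivatives
  have dx1 : ∀ x y : ℝ, HasDerivAt (fun x' => u x' y) (Dx U (x, y)) x :=
    fun x y => hasDerivAt_slice_x hD1 x y
  have dx2 : ∀ x y : ℝ, HasDerivAt (fun x' => Dx U (x', y)) (Dx (Dx U) (x, y)) x :=
    fun x y => hasDerivAt_slice_x (hDxU.differentiable (by norm_num)) x y
  have dx3 : ∀ x y : ℝ, HasDerivAt (fun x' => Dx (Dx U) (x', y)) (Dx (Dx (Dx U)) (x, y)) x :=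
    fun x y => hasDerivAt_slice_x (hDxxU.differentiable (by norm_num)) x y
  have dy1 : ∀ x y : ℝ, HasDerivAt (fun y' => u x y') (Dy U (x, y)) y :=
    fun x y => hasDerivAt_slice_y hD1 x y
  have dy2 : ∀ x y : ℝ, HasDerivAt (fun y' => Dy U (x, y')) (Dy (Dy U) (x, y)) y :=
    fun x y => hasDerivAt_slice_y (hDyU.differentiable (by norm_num)) x y
  have epdx : ∀ x y : ℝ, pdx u x y = Dx U (x, y) := fun x y => (dx1 x y).deriv
  have epdy : ∀ x y : ℝ, pdy u x y = Dy U (x, y) := fun x y => (dy1 x y).deriv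
  have epdx3 : ∀ x y : ℝ, pdx3 u x y = Dx (Dx (Dx U)) (x, y) := by
    intro x y
    have h1 : deriv (fun x' => u x' y) = fun x' => Dx U (x', y) :=
      funext fun x' => (dx1 x' y).deriv
    have h2 : deriv (fun x' => Dx U (x', y)) = fun x' => Dx (Dx U) (x', y) :=
      funext fun x' => (dx2 x' y).deriv
    rw [pdx3, show (3 : ℕ) = 2 + 1 from rfl, iteratedDeriv_succ,
      show (2 : ℕ) = 1 + 1 from rfl, iteratedDeriv_succ, iteratedDeriv_one, h1, h2]
    exact (dx3 x y).deriv
  have epdy2 : ∀ x y : ℝ, pdy2 u x y = Dy (Dy U) (x, y) := by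
    intro x y
    have h1 : deriv (fun y' => u x y') = fun y' => Dy U (x, y') :=
      funext fun y' => (dy1 x y').deriv
    rw [pdy2, show (2 : ℕ) = 1 + 1 from rfl, iteratedDeriv_succ, iteratedDeriv_one, h1]
    exact (dy2 x y).deriv
  -- joint continuity of partial derivatives
  have cpdx : Continuous (fun p : ℝ × ℝ => pdx u p.1 p.2) := by
    have h : (fun p : ℝ × ℝ => pdx u p.1 p.2) = Dx U := funext fun p => epdx p.1 p.2
    rw [h]; exact cDx
  have cpdx3 : Continuous (fun p : ℝ × ℝ => pdx3 u p.1 p.2) := by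
    have h : (fun p : ℝ × ℝ => pdx3 u p.1 p.2) = Dx (Dx (Dx U)) :=
      funext fun p => epdx3 p.1 p.2
    rw [h]; exact cDxxx
  have cpdy : Continuous (fun p : ℝ × ℝ => pdy u p.1 p.2) := by
    have h : (fun p : ℝ × ℝ => pdy u p.1 p.2) = Dy U := funext fun p => epdy p.1 p.2
    rw [h]; exact cDy
  have cpdy2 : Continuous (fun p : ℝ × ℝ => pdy2 u p.1 p.2) := by
    have h : (fun p : ℝ × ℝ => pdy2 u p.1 p.2) = Dy (Dy U) := funext fun p => epdy2 p.1 p.2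
    rw [h]; exact cDyy
  have cU' : Continuous (fun p : ℝ × ℝ => u p.1 p.2) := hu.continuous
  -- joint continuity of V = pxInvStar u, G = pxInvStar (pdy u), W = pxInv L (pdy2 u)
  have cV : Continuous (fun p : ℝ × ℝ => pxInvStar u p.1 p.2) := contPrimitive cU' 0
  have cG : Continuous (fun p : ℝ × ℝ => pxInvStar (pdy u) p.1 p.2) := contPrimitive cpdy 0
  have cW : Continuous (fun p : ℝ × ℝ => pxInv L (pdy2 u) p.1 p.2) := by
    have he : (fun p : ℝ × ℝ => pxInv L (pdy2 u) p.1 p.2)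
        = fun p : ℝ × ℝ => ∫ t in L..p.1, pdy2 u t p.2 :=
      funext fun p => (intervalIntegral.integral_symm p.1 L).symm
    rw [he]; exact contPrimitive cpdy2 L
  -- x-derivatives of V, G, W
  have dV : ∀ x y : ℝ, HasDerivAt (fun x' => pxInvStar u x' y) (u x y) x :=
    fun x y => hasDerivAt_primitive (contSliceX cU' y) 0 x
  have dG : ∀ x y : ℝ, HasDerivAt (fun x' => pxInvStar (pdy u) x' y) (pdy u x y) x :=
    fun x y => hasDerivAt_primitive (contSliceX cpdy y) 0 x
  have dW : ∀ x y : ℝ, HasDerivAt (fun x' => pxInv L (pdy2 u) x' y) (pdy2 u x y) x := by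
    intro x y
    have h := hasDerivAt_primitive (contSliceX cpdy2 y) L x
    exact h.congr_of_eventuallyEq
      (Filter.Eventually.of_forall fun x' => (intervalIntegral.integral_symm x' L).symm)
  -- y-derivatives
  have dyy : ∀ x y : ℝ, HasDerivAt (fun y' => pdy u x y') (pdy2 u x y) y := by
    intro x y
    have h := (dy2 x y).congr_of_eventuallyEq (Filter.Eventually.of_forall fun y' => epdy x y')
    rw [epdy2 x y]; exact h
  have dVy : ∀ x y : ℝ, HasDerivAt (fun y' => pxInvStar u x y') (pxInvStar (pdy u) x y) y := by
    intro x y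
    have hfun : ∀ y' : ℝ, pxInvStar u x y'
        = (∫ s in (0:ℝ)..x, u s 0) + ∫ t in (0:ℝ)..y', pxInvStar (pdy u) x t := by
      intro y'
      have h1 : ∀ s : ℝ, u s y' = u s 0 + ∫ t in (0:ℝ)..y', pdy u s t := by
        intro s
        have hd : ∀ t ∈ Set.uIcc (0:ℝ) y', HasDerivAt (fun t' => u s t') (pdy u s t) t := by
          intro t _
          have h := dy1 s t; rwa [← epdy s t] at h
        have hint : IntervalIntegrable (fun t => pdy u s t) volume 0 y' :=
          (contSliceY cpdy s).intervalIntegrable 0 y'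
        have h := intervalIntegral.integral_eq_sub_of_hasDerivAt hd hint
        linarith [h]
      calc pxInvStar u x y' = ∫ s in (0:ℝ)..x, (u s 0 + ∫ t in (0:ℝ)..y', pdy u s t) :=
            intervalIntegral.integral_congr fun s _ => h1 s
        _ = (∫ s in (0:ℝ)..x, u s 0) + ∫ s in (0:ℝ)..x, ∫ t in (0:ℝ)..y', pdy u s t :=
            intervalIntegral.integral_add ((contSliceX cU' 0).intervalIntegrable 0 x)
              ((contParamInt cpdy 0 y').intervalIntegrable 0 x)
        _ = (∫ s in (0:ℝ)..x, u s 0) + ∫ t in (0:ℝ)..y', pxInvStar (pdy u) x t := by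
            rw [my_swap (f := fun s t => pdy u s t) (contUncurry cpdy) 0 x 0 y']; rfl
    have hprim : HasDerivAt
        (fun y' => (∫ s in (0:ℝ)..x, u s 0) + ∫ t in (0:ℝ)..y', pxInvStar (pdy u) x t)
        (pxInvStar (pdy u) x y) y :=
      (hasDerivAt_primitive (contSliceY cG x) 0 y).const_add _
    exact hprim.congr_of_eventuallyEq (Filter.Eventually.of_forall hfun)
  -- basic boundary values of the primitives
  have hWL : ∀ y : ℝ, pxInv L (pdy2 u) L y = 0 := fun y => by simp [pxInv]
  have hV0 : ∀ y : ℝ, pxInvStar u 0 y = 0 := fun y => by simp [pxInvStar]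
  have hG0 : ∀ y : ℝ, pxInvStar (pdy u) 0 y = 0 := fun y => by simp [pxInvStar]
  -- continuity of integrands
  have cF1 : Continuous (fun p : ℝ × ℝ => u p.1 p.2 * (-(pdx u p.1 p.2) - pdx3 u p.1 p.2)) :=
    cU'.mul ((cpdx.neg).sub cpdx3)
  have cF2 : Continuous (fun p : ℝ × ℝ => u p.1 p.2 * (-(pxInv L (pdy2 u) p.1 p.2))) :=
    cU'.mul cW.neg
  have cQ : Continuous (fun p : ℝ × ℝ => pxInvStar u p.1 p.2 * pdy2 u p.1 p.2) := cV.mul cpdy2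
  have cGy : Continuous (fun p : ℝ × ℝ => pxInvStar (pdy u) p.1 p.2 * pdy u p.1 p.2) :=
    cG.mul cpdy
  -- STEP 1 : split the integral
  have step1 : (∫ x in (0:ℝ)..L, ∫ y in (0:ℝ)..L,
        u x y * (-(pdx u x y) - pdx3 u x y - pxInv L (pdy2 u) x y))
      = (∫ x in (0:ℝ)..L, ∫ y in (0:ℝ)..L, u x y * (-(pdx u x y) - pdx3 u x y))
        + (∫ x in (0:ℝ)..L, ∫ y in (0:ℝ)..L, u x y * (-(pxInv L (pdy2 u) x y))) := by
    rw [← intervalIntegral.integral_add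
      ((contParamInt (g := fun x y => u x y * (-(pdx u x y) - pdx3 u x y)) cF1 0 L).intervalIntegrable 0 L)
      ((contParamInt (g := fun x y => u x y * (-(pxInv L (pdy2 u) x y))) cF2 0 L).intervalIntegrable 0 L)]
    apply intervalIntegral.integral_congr
    intro x _
    dsimp only
    rw [← intervalIntegral.integral_add
      ((contSliceY (g := fun x y => u x y * (-(pdx u x y) - pdx3 u x y)) cF1 x).intervalIntegrable 0 L)
      ((contSliceY (g := fun x y => u x y * (-(pxInv L (pdy2 u) x y))) cF2 x).intervalIntegrable 0 L)]
    apply intervalIntegral.integral_congr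
    intro y _
    ring
  -- STEP 2 : the local-terms integral
  have swap1 : (∫ x in (0:ℝ)..L, ∫ y in (0:ℝ)..L, u x y * (-(pdx u x y) - pdx3 u x y))
      = ∫ y in (0:ℝ)..L, ∫ x in (0:ℝ)..L, u x y * (-(pdx u x y) - pdx3 u x y) :=
    my_swap (f := fun x y => u x y * (-(pdx u x y) - pdx3 u x y)) (contUncurry cF1) 0 L 0 L
  have step2 : (∫ y in (0:ℝ)..L, ∫ x in (0:ℝ)..L, u x y * (-(pdx u x y) - pdx3 u x y))
      = -((1 - α^2)/2) * ∫ y in (0:ℝ)..L, (pdx u 0 y)^2 := by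
    rw [← intervalIntegral.integral_const_mul]
    apply intervalIntegral.integral_congr
    intro y hy
    dsimp only
    have hy' : y ∈ Set.Icc (0:ℝ) L := by rwa [Set.uIcc_of_le hL.le] at hy
    obtain ⟨hb0, hbL, hbax⟩ := hbx y hy'
    have hderiv : ∀ x ∈ Set.uIcc (0:ℝ) L, HasDerivAt
        (fun x' => -(u x' y ^ 2) / 2 - u x' y * Dx (Dx U) (x', y) + Dx U (x', y) ^ 2 / 2)
        (u x y * (-(pdx u x y) - pdx3 u x y)) x := by
      intro x _
      have h := ((((dx1 x y).pow 2).neg.div_const 2).sub ((dx1 x y).mul (dx3 x y))).add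
        (((dx2 x y).pow 2).div_const 2)
      refine h.congr_deriv ?_
      rw [epdx x y, epdx3 x y]
      push_cast
      ring
    have hint : IntervalIntegrable (fun x => u x y * (-(pdx u x y) - pdx3 u x y)) volume 0 L :=
      (contSliceX (g := fun x y => u x y * (-(pdx u x y) - pdx3 u x y)) cF1 y).intervalIntegrable 0 L
    rw [intervalIntegral.integral_eq_sub_of_hasDerivAt hderiv hint]
    have e1 : Dx U (L, y) = α * pdx u 0 y := by rw [← epdx L y]; exact hbax
    have e0 : Dx U (0, y) = pdx u 0 y := (epdx 0 y).symm
    simp only [hb0, hbL, e1, e0, zero_pow, neg_zero, zero_div, zero_mul, mul_zero, sub_zero,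
      zero_sub, zero_add]
    ring
  -- STEP 3 : the nonlocal-term integral
  have swap2 : (∫ x in (0:ℝ)..L, ∫ y in (0:ℝ)..L, u x y * (-(pxInv L (pdy2 u) x y)))
      = ∫ y in (0:ℝ)..L, ∫ x in (0:ℝ)..L, u x y * (-(pxInv L (pdy2 u) x y)) :=
    my_swap (f := fun x y => u x y * (-(pxInv L (pdy2 u) x y))) (contUncurry cF2) 0 L 0 L
  have step3b : ∀ y : ℝ, (∫ x in (0:ℝ)..L, u x y * (-(pxInv L (pdy2 u) x y)))
      = ∫ x in (0:ℝ)..L, pxInvStar u x y * pdy2 u x y := by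
    intro y
    have hderiv : ∀ x ∈ Set.uIcc (0:ℝ) L, HasDerivAt
        (fun x' => pxInvStar u x' y * pxInv L (pdy2 u) x' y)
        (u x y * pxInv L (pdy2 u) x y + pxInvStar u x y * pdy2 u x y) x :=
      fun x _ => (dV x y).mul (dW x y)
    have hiA : IntervalIntegrable (fun x => u x y * pxInv L (pdy2 u) x y) volume 0 L :=
      ((contSliceX cU' y).mul (contSliceX cW y)).intervalIntegrable 0 L
    have hiB : IntervalIntegrable (fun x => pxInvStar u x y * pdy2 u x y) volume 0 L :=
      ((contSliceX cV y).mul (contSliceX cpdy2 y)).intervalIntegrable 0 L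
    have h0 := intervalIntegral.integral_eq_sub_of_hasDerivAt hderiv (hiA.add hiB)
    rw [intervalIntegral.integral_add hiA hiB] at h0
    simp only [hWL y, hV0 y, mul_zero, zero_mul, sub_zero, zero_sub, sub_self] at h0
    have hneg : (∫ x in (0:ℝ)..L, u x y * (-(pxInv L (pdy2 u) x y)))
        = -∫ x in (0:ℝ)..L, u x y * pxInv L (pdy2 u) x y := by
      rw [← intervalIntegral.integral_neg]
      exact intervalIntegral.integral_congr fun x _ => by ring
    rw [hneg]
    linarith [h0]
  have swap3 : (∫ y in (0:ℝ)..L, ∫ x in (0:ℝ)..L, pxInvStar u x y * pdy2 u x y)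
      = ∫ x in (0:ℝ)..L, ∫ y in (0:ℝ)..L, pxInvStar u x y * pdy2 u x y :=
    (my_swap (f := fun x y => pxInvStar u x y * pdy2 u x y) (contUncurry cQ) 0 L 0 L).symm
  have step3d : ∀ x ∈ Set.uIcc (0:ℝ) L, (∫ y in (0:ℝ)..L, pxInvStar u x y * pdy2 u x y)
      = β * (pxInvStar u x L * pdx u x L)
        - ∫ y in (0:ℝ)..L, pxInvStar (pdy u) x y * pdy u x y := by
    intro x hx
    have hx' : x ∈ Set.Icc (0:ℝ) L := by rwa [Set.uIcc_of_le hL.le] at hx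
    obtain ⟨hbyL, hby0⟩ := hby x hx'
    have hderiv : ∀ y ∈ Set.uIcc (0:ℝ) L, HasDerivAt
        (fun y' => pxInvStar u x y' * pdy u x y')
        (pxInvStar (pdy u) x y * pdy u x y + pxInvStar u x y * pdy2 u x y) y :=
      fun y _ => (dVy x y).mul (dyy x y)
    have hiA : IntervalIntegrable (fun y => pxInvStar (pdy u) x y * pdy u x y) volume 0 L :=
      ((contSliceY cG x).mul (contSliceY cpdy x)).intervalIntegrable 0 L
    have hiB : IntervalIntegrable (fun y => pxInvStar u x y * pdy2 u x y) volume 0 L :=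
      ((contSliceY cV x).mul (contSliceY cpdy2 x)).intervalIntegrable 0 L
    have h0 := intervalIntegral.integral_eq_sub_of_hasDerivAt hderiv (hiA.add hiB)
    rw [intervalIntegral.integral_add hiA hiB] at h0
    simp only [hbyL, hby0, mul_zero, sub_zero] at h0
    linear_combination h0
  have step3e : (∫ x in (0:ℝ)..L, β * (pxInvStar u x L * pdx u x L))
      = -β * ∫ x in (0:ℝ)..L, u x L ^ 2 := by
    rw [intervalIntegral.integral_const_mul]
    have hderiv : ∀ x ∈ Set.uIcc (0:ℝ) L, HasDerivAt
        (fun x' => pxInvStar u x' L * u x' L)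
        (u x L * u x L + pxInvStar u x L * pdx u x L) x := by
      intro x _
      have hd := dx1 x L
      rw [← epdx x L] at hd
      exact (dV x L).mul hd
    have hiA : IntervalIntegrable (fun x => u x L * u x L) volume 0 L :=
      ((contSliceX cU' L).mul (contSliceX cU' L)).intervalIntegrable 0 L
    have hiB : IntervalIntegrable (fun x => pxInvStar u x L * pdx u x L) volume 0 L :=
      ((contSliceX cV L).mul (contSliceX cpdx L)).intervalIntegrable 0 L
    have h0 := intervalIntegral.integral_eq_sub_of_hasDerivAt hderiv (hiA.add hiB)
    rw [intervalIntegral.integral_add hiA hiB] at h0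
    have huLL : u L L = 0 := (hbx L ⟨hL.le, le_refl L⟩).2.1
    simp only [huLL, hV0 L, mul_zero, zero_mul, sub_zero, sub_self] at h0
    have hsq : (∫ x in (0:ℝ)..L, u x L * u x L) = ∫ x in (0:ℝ)..L, u x L ^ 2 :=
      intervalIntegral.integral_congr fun x _ => by ring
    rw [hsq] at h0
    linear_combination β * h0
  have step3f : (∫ x in (0:ℝ)..L, ∫ y in (0:ℝ)..L, pxInvStar (pdy u) x y * pdy u x y)
      = (1/2) * ∫ y in (0:ℝ)..L, (pxInv L (pdy u) 0 y)^2 := by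
    rw [my_swap (f := fun x y => pxInvStar (pdy u) x y * pdy u x y) (contUncurry cGy) 0 L 0 L,
      ← intervalIntegral.integral_const_mul]
    apply intervalIntegral.integral_congr
    intro y _
    dsimp only
    have hderiv : ∀ x ∈ Set.uIcc (0:ℝ) L, HasDerivAt
        (fun x' => pxInvStar (pdy u) x' y ^ 2 / 2)
        (pxInvStar (pdy u) x y * pdy u x y) x := by
      intro x _
      have h := ((dG x y).pow 2).div_const 2
      refine h.congr_deriv ?_
      push_cast
      ring
    have hint : IntervalIntegrable (fun x => pxInvStar (pdy u) x y * pdy u x y) volume 0 L :=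
      ((contSliceX cG y).mul (contSliceX cpdy y)).intervalIntegrable 0 L
    rw [intervalIntegral.integral_eq_sub_of_hasDerivAt hderiv hint]
    have hGL : pxInv L (pdy u) 0 y = -(pxInvStar (pdy u) L y) := rfl
    rw [hGL]
    simp only [hG0 y]
    ring
  -- combine the Q-pieces
  have hQsplit : (∫ x in (0:ℝ)..L, ∫ y in (0:ℝ)..L, pxInvStar u x y * pdy2 u x y)
      = (∫ x in (0:ℝ)..L, β * (pxInvStar u x L * pdx u x L))
        - ∫ x in (0:ℝ)..L, ∫ y in (0:ℝ)..L, pxInvStar (pdy u) x y * pdy u x y := by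
    rw [← intervalIntegral.integral_sub (f := fun x => β * (pxInvStar u x L * pdx u x L))
      ((continuous_const.mul ((contSliceX cV L).mul (contSliceX cpdx L))).intervalIntegrable 0 L)
      ((contParamInt (g := fun x y => pxInvStar (pdy u) x y * pdy u x y) cGy 0 L).intervalIntegrable 0 L)]
    exact intervalIntegral.integral_congr fun x hx => step3d x hx
  -- the main identity
  have hswap2' : (∫ y in (0:ℝ)..L, ∫ x in (0:ℝ)..L, u x y * (-(pxInv L (pdy2 u) x y)))
      = ∫ y in (0:ℝ)..L, ∫ x in (0:ℝ)..L, pxInvStar u x y * pdy2 u x y :=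
    intervalIntegral.integral_congr fun y _ => step3b y
  have main : (∫ x in (0:ℝ)..L, ∫ y in (0:ℝ)..L,
        u x y * (-(pdx u x y) - pdx3 u x y - pxInv L (pdy2 u) x y))
      = -((1 - α^2)/2) * (∫ y in (0:ℝ)..L, (pdx u 0 y)^2)
        - β * (∫ x in (0:ℝ)..L, (u x L)^2)
        - (1/2) * (∫ y in (0:ℝ)..L, (pxInv L (pdy u) 0 y)^2) := by
    rw [step1, swap1, step2, swap2, hswap2', swap3, hQsplit, step3e, step3f]
    ring
  refine ⟨main, ?_⟩
  rw [main]
  have i1 : 0 ≤ ∫ y in (0:ℝ)..L, (pdx u 0 y)^2 :=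
    intervalIntegral.integral_nonneg hL.le fun _ _ => sq_nonneg _
  have i2 : 0 ≤ ∫ x in (0:ℝ)..L, (u x L)^2 :=
    intervalIntegral.integral_nonneg hL.le fun _ _ => sq_nonneg _
  have i3 : 0 ≤ ∫ y in (0:ℝ)..L, (pxInv L (pdy u) 0 y)^2 :=
    intervalIntegral.integral_nonneg hL.le fun _ _ => sq_nonneg _
  have hα2 : α ^ 2 < 1 := by nlinarith [sq_abs α, abs_nonneg α]
  nlinarith [mul_nonneg (by linarith : (0:ℝ) ≤ (1 - α^2)/2) i1, mul_nonneg hβ.le i2, i3]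

end
end

section
/- Let L > 0 and fix α, β with 0 < |α| < 1 and β > 0. Let v : [0,L]² → ℝ be of class C³ and satisfy the boundary conditions v(0,y) = v(L,y) = 0, v_x(0,y) = α v_x(L,y) for all y ∈ [0,L], and v_y(x,L) = −β v_x(x,L), v_y(x,0) = 0 for all x ∈ [0,L]. Then ∫_Ω v(x,y) · ( v_x(x,y) + v_xxx(x,y) + ((∂ₓ⁻¹)* v_yy)(x,y) ) dx dy = −((1−α²)/2) ∫₀^L v_x(L,y)² dy − β ∫₀^L v(x,L)² dx − ½ ∫₀^L (((∂ₓ⁻¹)* v_y)(L,y))² dy; in particular this quantity is ≤ 0. -/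
open MeasureTheory Real Set

noncomputable section

def DX (F : ℝ × ℝ → ℝ) (p : ℝ × ℝ) : ℝ := fderiv ℝ F p (1, 0)
def DY (F : ℝ × ℝ → ℝ) (p : ℝ × ℝ) : ℝ := fderiv ℝ F p (0, 1)

lemma hasDerivAt_sliceX {F : ℝ × ℝ → ℝ} {x y : ℝ} (hF : DifferentiableAt ℝ F (x, y)) :
    HasDerivAt (fun x' => F (x', y)) (DX F (x, y)) x := by
  have h1 : HasDerivAt (fun x' : ℝ => ((x' : ℝ), y)) ((1:ℝ), (0:ℝ)) x :=
    (hasDerivAt_id x).prodMk (hasDerivAt_const x y)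
  exact hF.hasFDerivAt.comp_hasDerivAt x h1

lemma hasDerivAt_sliceY {F : ℝ × ℝ → ℝ} {x y : ℝ} (hF : DifferentiableAt ℝ F (x, y)) :
    HasDerivAt (fun y' => F (x, y')) (DY F (x, y)) y := by
  have h1 : HasDerivAt (fun y' : ℝ => ((x : ℝ), y')) ((0:ℝ), (1:ℝ)) y :=
    (hasDerivAt_const y x).prodMk (hasDerivAt_id y)
  exact hF.hasFDerivAt.comp_hasDerivAt y h1

lemma contDiff_DX {F : ℝ × ℝ → ℝ} {m n : ℕ∞} (hF : ContDiff ℝ n F) (hmn : m + 1 ≤ n) :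
    ContDiff ℝ m (DX F) := (hF.fderiv_right (by exact_mod_cast hmn)).clm_apply contDiff_const

lemma contDiff_DY {F : ℝ × ℝ → ℝ} {m n : ℕ∞} (hF : ContDiff ℝ n F) (hmn : m + 1 ≤ n) :
    ContDiff ℝ m (DY F) := (hF.fderiv_right (by exact_mod_cast hmn)).clm_apply contDiff_const

lemma swap_base {f : ℝ → ℝ → ℝ} (hf : Continuous fun p : ℝ × ℝ => f p.1 p.2)
    {a b c d : ℝ} (hab : a ≤ b) (hcd : c ≤ d) :
    ∫ x in a..b, ∫ y in c..d, f x y = ∫ y in c..d, ∫ x in a..b, f x y := by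
  simp only [intervalIntegral.integral_of_le hab, intervalIntegral.integral_of_le hcd]
  apply MeasureTheory.integral_integral_swap
  have h1 : IntegrableOn (Function.uncurry f) (Icc a b ×ˢ Icc c d) volume :=
    hf.continuousOn.integrableOn_compact (isCompact_Icc.prod isCompact_Icc)
  have h2 : IntegrableOn (Function.uncurry f) (Ioc a b ×ˢ Ioc c d) volume :=
    h1.mono_set (Set.prod_mono Set.Ioc_subset_Icc_self Set.Ioc_subset_Icc_self)
  rwa [Measure.prod_restrict, ← Measure.volume_eq_prod]

lemma swap' {f : ℝ → ℝ → ℝ} (hf : Continuous fun p : ℝ × ℝ => f p.1 p.2)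
    {a b : ℝ} (hab : a ≤ b) (c d : ℝ) :
    ∫ x in a..b, ∫ y in c..d, f x y = ∫ y in c..d, ∫ x in a..b, f x y := by
  rcases le_total c d with hcd | hcd
  · exact swap_base hf hab hcd
  · have h1 : ∀ x : ℝ, (∫ y in c..d, f x y) = -∫ y in d..c, f x y := fun x =>
      intervalIntegral.integral_symm d c
    simp only [h1]
    rw [intervalIntegral.integral_neg, swap_base hf hab hcd,
      intervalIntegral.integral_symm d c]

set_option maxHeartbeats 1000000

/-- Dissipativity of the adjoint operator `A* v = v_x + v_xxx + (∂ₓ⁻¹)* v_yy` under the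
adjoint boundary conditions:
`∫_Ω v · A*v = -((1-α²)/2) ∫₀^L v_x(L,y)² dy - β ∫₀^L v(x,L)² dx
  - ½ ∫₀^L (((∂ₓ⁻¹)* v_y)(L,y))² dy ≤ 0`. -/
theorem kp_adjoint_operator_dissipative (L α β : ℝ) (hL : 0 < L)
    (hα0 : 0 < |α|) (hα1 : |α| < 1) (hβ : 0 < β)
    (v : ℝ → ℝ → ℝ) (hv : ContDiff ℝ 3 (fun p : ℝ × ℝ => v p.1 p.2))
    (hbx : ∀ y ∈ Set.Icc (0:ℝ) L, v 0 y = 0 ∧ v L y = 0 ∧ pdx v 0 y = α * pdx v L y)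
    (hby : ∀ x ∈ Set.Icc (0:ℝ) L, pdy v x L = -β * pdx v x L ∧ pdy v x 0 = 0) :
    (∫ x in (0:ℝ)..L, ∫ y in (0:ℝ)..L,
        v x y * (pdx v x y + pdx3 v x y + pxInvStar (pdy2 v) x y))
      = -((1 - α^2)/2) * (∫ y in (0:ℝ)..L, (pdx v L y)^2)
        - β * (∫ x in (0:ℝ)..L, (v x L)^2)
        - (1/2) * (∫ y in (0:ℝ)..L, (pxInvStar (pdy v) L y)^2) ∧
    (∫ x in (0:ℝ)..L, ∫ y in (0:ℝ)..L,
        v x y * (pdx v x y + pdx3 v x y + pxInvStar (pdy2 v) x y)) ≤ 0 := by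
  have hL0 : (0:ℝ) ≤ L := hL.le
  set F : ℝ × ℝ → ℝ := fun p => v p.1 p.2 with hFdef
  -- smoothness of the various derivatives
  have hDX1 : ContDiff ℝ 2 (DX F) := contDiff_DX hv (by norm_num)
  have hDX2 : ContDiff ℝ 1 (DX (DX F)) := contDiff_DX hDX1 (by norm_num)
  have hDX3 : ContDiff ℝ 0 (DX (DX (DX F))) := contDiff_DX hDX2 (by norm_num)
  have hDY1 : ContDiff ℝ 2 (DY F) := contDiff_DY hv (by norm_num)
  have hDY2 : ContDiff ℝ 1 (DY (DY F)) := contDiff_DY hDY1 (by norm_num)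
  have hdF : Differentiable ℝ F := hv.differentiable (by norm_num)
  have hdDX1 : Differentiable ℝ (DX F) := hDX1.differentiable (by norm_num)
  have hdDX2 : Differentiable ℝ (DX (DX F)) := hDX2.differentiable one_ne_zero
  have hdDY1 : Differentiable ℝ (DY F) := hDY1.differentiable (by norm_num)
  -- derivative facts for slices
  have Hv : ∀ x y : ℝ, HasDerivAt (fun x' => v x' y) (DX F (x, y)) x :=
    fun x y => hasDerivAt_sliceX (hdF _)
  have Hvx : ∀ x y : ℝ, HasDerivAt (fun x' => DX F (x', y)) (DX (DX F) (x, y)) x :=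
    fun x y => hasDerivAt_sliceX (hdDX1 _)
  have Hvxx : ∀ x y : ℝ, HasDerivAt (fun x' => DX (DX F) (x', y)) (DX (DX (DX F)) (x, y)) x :=
    fun x y => hasDerivAt_sliceX (hdDX2 _)
  have Hy : ∀ x y : ℝ, HasDerivAt (fun y' => v x y') (DY F (x, y)) y :=
    fun x y => hasDerivAt_sliceY (hdF _)
  have Hyy : ∀ x y : ℝ, HasDerivAt (fun y' => DY F (x, y')) (DY (DY F) (x, y)) y :=
    fun x y => hasDerivAt_sliceY (hdDY1 _)
  -- identification of the pd* functions
  have epdx : ∀ x y : ℝ, pdx v x y = DX F (x, y) := fun x y => (Hv x y).deriv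
  have epdy : ∀ x y : ℝ, pdy v x y = DY F (x, y) := fun x y => (Hy x y).deriv
  have epdx3 : ∀ x y : ℝ, pdx3 v x y = DX (DX (DX F)) (x, y) := by
    intro x y
    have e1 : deriv (fun x' => v x' y) = fun x' => DX F (x', y) :=
      funext fun x' => (Hv x' y).deriv
    have e2 : deriv (fun x' => DX F (x', y)) = fun x' => DX (DX F) (x', y) :=
      funext fun x' => (Hvx x' y).deriv
    show iteratedDeriv 3 (fun x' => v x' y) x = _
    rw [show (3:ℕ) = 2 + 1 from rfl, iteratedDeriv_succ,
      show (2:ℕ) = 1 + 1 from rfl, iteratedDeriv_succ, iteratedDeriv_one, e1, e2]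
    exact (Hvxx x y).deriv
  have epdy2 : ∀ x y : ℝ, pdy2 v x y = DY (DY F) (x, y) := by
    intro x y
    have e1 : deriv (fun y' => v x y') = fun y' => DY F (x, y') :=
      funext fun y' => (Hy x y').deriv
    show iteratedDeriv 2 (fun y' => v x y') y = _
    rw [show (2:ℕ) = 1 + 1 from rfl, iteratedDeriv_succ, iteratedDeriv_one, e1]
    exact (Hyy x y).deriv
  -- continuity facts
  have cF : Continuous F := hv.continuous
  have cDX1 : Continuous (DX F) := hDX1.continuous
  have cDX2 : Continuous (DX (DX F)) := hDX2.continuous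
  have cDX3 : Continuous (DX (DX (DX F))) := hDX3.continuous
  have cDY1 : Continuous (DY F) := hDY1.continuous
  have cDY2 : Continuous (DY (DY F)) := hDY2.continuous
  have sliceYc : ∀ (G : ℝ × ℝ → ℝ), Continuous G → ∀ x : ℝ, Continuous fun y => G (x, y) :=
    fun G hG x => hG.comp (continuous_const.prodMk continuous_id)
  have sliceXc : ∀ (G : ℝ × ℝ → ℝ), Continuous G → ∀ y : ℝ, Continuous fun x => G (x, y) :=
    fun G hG y => hG.comp (continuous_id.prodMk continuous_const)
  -- the antiderivative functions
  set W : ℝ → ℝ → ℝ := fun x y => ∫ s in (0:ℝ)..x, DY F (s, y) with hWdef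
  set P : ℝ → ℝ → ℝ := fun x y => ∫ s in (0:ℝ)..x, DY (DY F) (s, y) with hPdef
  have eW : ∀ x y : ℝ, pxInvStar (pdy v) x y = W x y := by
    intro x y
    show (∫ s in (0:ℝ)..x, pdy v s y) = _
    rw [hWdef]
    exact intervalIntegral.integral_congr fun s _ => epdy s y
  have eP : ∀ x y : ℝ, pxInvStar (pdy2 v) x y = P x y := by
    intro x y
    show (∫ s in (0:ℝ)..x, pdy2 v s y) = _
    rw [hPdef]
    exact intervalIntegral.integral_congr fun s _ => epdy2 s y
  have cW : Continuous (fun p : ℝ × ℝ => W p.1 p.2) := by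
    have h := intervalIntegral.continuous_parametric_primitive_of_continuous (μ := volume)
      (f := fun y s => DY F (s, y)) (a₀ := 0) (cDY1.comp continuous_swap)
    have h2 := h.comp continuous_swap
    simp only [hWdef]
    simpa only [Function.comp_def, Prod.fst_swap, Prod.snd_swap] using h2
  have cP : Continuous (fun p : ℝ × ℝ => P p.1 p.2) := by
    have h := intervalIntegral.continuous_parametric_primitive_of_continuous (μ := volume)
      (f := fun y s => DY (DY F) (s, y)) (a₀ := 0) (cDY2.comp continuous_swap)
    have h2 := h.comp continuous_swap
    simp only [hPdef]
    simpa only [Function.comp_def, Prod.fst_swap, Prod.snd_swap] using h2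
  -- derivative of W in y (for x ∈ [0,L]) and in x
  have HWy : ∀ x ∈ Icc (0:ℝ) L, ∀ y : ℝ, HasDerivAt (fun y' => W x y') (P x y) y := by
    intro x hx y
    have hG : Continuous (fun t => ∫ s in (0:ℝ)..x, DY (DY F) (s, t)) := by
      apply intervalIntegral.continuous_parametric_intervalIntegral_of_continuous' (μ := volume)
        (f := fun t s => DY (DY F) (s, t)) (cDY2.comp continuous_swap) 0 x
    have hrep : ∀ y' : ℝ, W x y' = W x 0 + ∫ t in (0:ℝ)..y', ∫ s in (0:ℝ)..x, DY (DY F) (s, t) := by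
      intro y'
      have hswap := swap' (f := fun s t => DY (DY F) (s, t)) cDY2 hx.1 0 y'
      rw [← hswap]
      have hin : ∀ s : ℝ, (∫ t in (0:ℝ)..y', DY (DY F) (s, t)) = DY F (s, y') - DY F (s, 0) :=
        fun s => intervalIntegral.integral_eq_sub_of_hasDerivAt (fun t _ => Hyy s t)
          ((sliceYc _ cDY2 s).intervalIntegrable _ _)
      rw [intervalIntegral.integral_congr (g := fun s => DY F (s, y') - DY F (s, 0))
        (fun s _ => hin s)]
      rw [intervalIntegral.integral_sub ((sliceXc _ cDY1 y').intervalIntegrable _ _)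
        ((sliceXc _ cDY1 0).intervalIntegrable _ _)]
      simp only [hWdef]
      ring
    have h0 : HasDerivAt (fun y' => ∫ t in (0:ℝ)..y', ∫ s in (0:ℝ)..x, DY (DY F) (s, t))
        (∫ s in (0:ℝ)..x, DY (DY F) (s, y)) y := (hG.integral_hasStrictDerivAt 0 y).hasDerivAt
    have h1 := h0.const_add (W x 0)
    have h2 : (fun y' => W x y') = fun y' =>
        W x 0 + ∫ t in (0:ℝ)..y', ∫ s in (0:ℝ)..x, DY (DY F) (s, t) := funext hrep
    rw [hPdef]
    rw [h2]
    exact h1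
  have HWx : ∀ y x : ℝ, HasDerivAt (fun x' => W x' y) (DY F (x, y)) x := by
    intro y x
    exact ((sliceXc _ cDY1 y).integral_hasStrictDerivAt 0 x).hasDerivAt
  have hW00 : ∀ y : ℝ, W 0 y = 0 := by
    intro y; simp [hWdef]
  have hW0 : ∀ x ∈ Icc (0:ℝ) L, W x 0 = 0 := by
    intro x hx
    have h : ∀ s ∈ uIcc (0:ℝ) x, DY F (s, 0) = 0 := by
      intro s hs
      rw [uIcc_of_le hx.1] at hs
      rw [← epdy]
      exact (hby s ⟨hs.1, hs.2.trans hx.2⟩).2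
    rw [hWdef]
    show (∫ s in (0:ℝ)..x, DY F (s, 0)) = 0
    rw [intervalIntegral.integral_congr (g := fun _ => (0:ℝ)) h]
    simp
  have hWL : ∀ x ∈ Icc (0:ℝ) L, W x L = -β * v x L := by
    intro x hx
    have h : ∀ s ∈ uIcc (0:ℝ) x, DY F (s, L) = -β * DX F (s, L) := by
      intro s hs
      rw [uIcc_of_le hx.1] at hs
      rw [← epdy, ← epdx]
      exact (hby s ⟨hs.1, hs.2.trans hx.2⟩).1
    have hftc : (∫ s in (0:ℝ)..x, DX F (s, L)) = v x L - v 0 L :=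
      intervalIntegral.integral_eq_sub_of_hasDerivAt (fun s _ => Hv s L)
        ((sliceXc _ cDX1 L).intervalIntegrable _ _)
    rw [hWdef]
    show (∫ s in (0:ℝ)..x, DY F (s, L)) = -β * v x L
    rw [intervalIntegral.integral_congr (g := fun s => -β * DX F (s, L)) h,
      intervalIntegral.integral_const_mul, hftc, (hbx L ⟨hL0, le_rfl⟩).1]
    ring
  -- main identity
  have key : (∫ x in (0:ℝ)..L, ∫ y in (0:ℝ)..L,
        v x y * (pdx v x y + pdx3 v x y + pxInvStar (pdy2 v) x y))
      = -((1 - α^2)/2) * (∫ y in (0:ℝ)..L, (pdx v L y)^2)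
        - β * (∫ x in (0:ℝ)..L, (v x L)^2)
        - (1/2) * (∫ y in (0:ℝ)..L, (pxInvStar (pdy v) L y)^2) := by
    have e0 : ∀ x y : ℝ, v x y * (pdx v x y + pdx3 v x y + pxInvStar (pdy2 v) x y)
        = v x y * DX F (x, y) + v x y * DX (DX (DX F)) (x, y) + v x y * P x y := by
      intro x y
      rw [epdx, epdx3, eP]
      ring
    -- integrability of the three inner pieces
    have cA : Continuous (fun p : ℝ × ℝ => v p.1 p.2 * DX F (p.1, p.2)) := cF.mul cDX1
    have cB : Continuous (fun p : ℝ × ℝ => v p.1 p.2 * DX (DX (DX F)) (p.1, p.2)) := cF.mul cDX3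
    have cC : Continuous (fun p : ℝ × ℝ => v p.1 p.2 * P p.1 p.2) := cF.mul cP
    have split1 : ∀ x : ℝ, (∫ y in (0:ℝ)..L,
        (v x y * DX F (x, y) + v x y * DX (DX (DX F)) (x, y) + v x y * P x y))
        = (∫ y in (0:ℝ)..L, v x y * DX F (x, y))
          + (∫ y in (0:ℝ)..L, v x y * DX (DX (DX F)) (x, y))
          + (∫ y in (0:ℝ)..L, v x y * P x y) := by
      intro x
      have i1 : IntervalIntegrable (fun y => v x y * DX F (x, y)) volume 0 L :=
        (sliceYc _ cA x).intervalIntegrable _ _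
      have i2 : IntervalIntegrable (fun y => v x y * DX (DX (DX F)) (x, y)) volume 0 L :=
        (sliceYc _ cB x).intervalIntegrable _ _
      have i3 : IntervalIntegrable (fun y => v x y * P x y) volume 0 L :=
        (sliceYc _ cC x).intervalIntegrable _ _
      rw [intervalIntegral.integral_add (i1.add i2) i3, intervalIntegral.integral_add i1 i2]
    have cS1 : Continuous fun x => ∫ y in (0:ℝ)..L, v x y * DX F (x, y) :=
      intervalIntegral.continuous_parametric_intervalIntegral_of_continuous' (μ := volume)
        (f := fun x y => v x y * DX F (x, y)) cA 0 L
    have cS2 : Continuous fun x => ∫ y in (0:ℝ)..L, v x y * DX (DX (DX F)) (x, y) :=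
      intervalIntegral.continuous_parametric_intervalIntegral_of_continuous' (μ := volume)
        (f := fun x y => v x y * DX (DX (DX F)) (x, y)) cB 0 L
    have cS3 : Continuous fun x => ∫ y in (0:ℝ)..L, v x y * P x y :=
      intervalIntegral.continuous_parametric_intervalIntegral_of_continuous' (μ := volume)
        (f := fun x y => v x y * P x y) cC 0 L
    -- Term 1 vanishes
    have T1 : (∫ x in (0:ℝ)..L, ∫ y in (0:ℝ)..L, v x y * DX F (x, y)) = 0 := by
      rw [swap' (f := fun x y => v x y * DX F (x, y)) cA hL0 0 L]
      have h : ∀ y ∈ uIcc (0:ℝ) L, (∫ x in (0:ℝ)..L, v x y * DX F (x, y)) = 0 := by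
        intro y hy
        rw [uIcc_of_le hL0] at hy
        have hftc : (∫ x in (0:ℝ)..L, v x y * DX F (x, y))
            = v L y * v L y / 2 - v 0 y * v 0 y / 2 := by
          apply intervalIntegral.integral_eq_sub_of_hasDerivAt
          · intro x _
            have h := ((Hv x y).mul (Hv x y)).div_const 2
            convert h using 1
            · rfl
            · rfl
            ring
          · exact (sliceXc _ cA y).intervalIntegrable _ _
        rw [hftc, (hbx y hy).1, (hbx y hy).2.1]
        ring
      rw [intervalIntegral.integral_congr (g := fun _ => (0:ℝ)) h]
      simp
    -- Term 2
    have T2 : (∫ x in (0:ℝ)..L, ∫ y in (0:ℝ)..L, v x y * DX (DX (DX F)) (x, y))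
        = -((1 - α^2)/2) * (∫ y in (0:ℝ)..L, (pdx v L y)^2) := by
      rw [swap' (f := fun x y => v x y * DX (DX (DX F)) (x, y)) cB hL0 0 L]
      have h : ∀ y ∈ uIcc (0:ℝ) L, (∫ x in (0:ℝ)..L, v x y * DX (DX (DX F)) (x, y))
          = -((1 - α^2)/2) * (pdx v L y)^2 := by
        intro y hy
        rw [uIcc_of_le hL0] at hy
        have ibp := intervalIntegral.integral_mul_deriv_eq_deriv_mul (a := (0:ℝ)) (b := L)
          (u := fun x => v x y) (v := fun x => DX (DX F) (x, y))
          (u' := fun x => DX F (x, y)) (v' := fun x => DX (DX (DX F)) (x, y))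
          (fun x _ => Hv x y) (fun x _ => Hvxx x y)
          ((sliceXc _ cDX1 y).intervalIntegrable _ _)
          ((sliceXc _ cDX3 y).intervalIntegrable _ _)
        have ibp' : (∫ x in (0:ℝ)..L, v x y * DX (DX (DX F)) (x, y))
            = v L y * DX (DX F) (L, y) - v 0 y * DX (DX F) (0, y)
              - ∫ x in (0:ℝ)..L, DX F (x, y) * DX (DX F) (x, y) := ibp
        have hftc : (∫ x in (0:ℝ)..L, DX F (x, y) * DX (DX F) (x, y))
            = DX F (L, y) * DX F (L, y) / 2 - DX F (0, y) * DX F (0, y) / 2 := by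
          apply intervalIntegral.integral_eq_sub_of_hasDerivAt
          · intro x _
            have h := ((Hvx x y).mul (Hvx x y)).div_const 2
            convert h using 1
            · rfl
            · rfl
            ring
          · exact ((sliceXc _ cDX1 y).mul (sliceXc _ cDX2 y)).intervalIntegrable _ _
        have hb3 : DX F (0, y) = α * DX F (L, y) := by
          rw [← epdx, ← epdx]; exact (hbx y hy).2.2
        rw [ibp', hftc, (hbx y hy).1, (hbx y hy).2.1, hb3, epdx L y]
        ring
      rw [intervalIntegral.integral_congr (g := fun y => -((1 - α^2)/2) * (pdx v L y)^2) h,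
        intervalIntegral.integral_const_mul]
    -- Term 3
    have inner3 : ∀ x ∈ uIcc (0:ℝ) L, (∫ y in (0:ℝ)..L, v x y * P x y)
        = -β * (v x L)^2 - ∫ y in (0:ℝ)..L, DY F (x, y) * W x y := by
      intro x hx
      rw [uIcc_of_le hL0] at hx
      have ibp := intervalIntegral.integral_mul_deriv_eq_deriv_mul (a := (0:ℝ)) (b := L)
        (u := fun y => v x y) (v := fun y => W x y)
        (u' := fun y => DY F (x, y)) (v' := fun y => P x y)
        (fun y _ => Hy x y) (fun y _ => HWy x hx y)
        ((sliceYc _ cDY1 x).intervalIntegrable _ _)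
        ((sliceYc _ cP x).intervalIntegrable _ _)
      have ibp' : (∫ y in (0:ℝ)..L, v x y * P x y)
          = v x L * W x L - v x 0 * W x 0 - ∫ y in (0:ℝ)..L, DY F (x, y) * W x y := ibp
      rw [ibp', hW0 x hx, hWL x hx]
      ring
    have cDYW : Continuous (fun p : ℝ × ℝ => DY F (p.1, p.2) * W p.1 p.2) := cDY1.mul cW
    have T3 : (∫ x in (0:ℝ)..L, ∫ y in (0:ℝ)..L, v x y * P x y)
        = -(β * (∫ x in (0:ℝ)..L, (v x L)^2))
          - (1/2) * (∫ y in (0:ℝ)..L, (pxInvStar (pdy v) L y)^2) := by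
      rw [intervalIntegral.integral_congr (g := fun x =>
        -β * (v x L)^2 - ∫ y in (0:ℝ)..L, DY F (x, y) * W x y) inner3]
      have iA : IntervalIntegrable (fun x => -β * (v x L)^2) volume 0 L := by
        apply Continuous.intervalIntegrable
        exact continuous_const.mul ((sliceXc _ cF L).pow 2)
      have iB : IntervalIntegrable (fun x => ∫ y in (0:ℝ)..L, DY F (x, y) * W x y) volume 0 L := by
        apply Continuous.intervalIntegrable
        exact intervalIntegral.continuous_parametric_intervalIntegral_of_continuous' (μ := volume)
          (f := fun x y => DY F (x, y) * W x y) cDYW 0 L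
      rw [intervalIntegral.integral_sub iA iB, intervalIntegral.integral_const_mul]
      have hsw := swap' (f := fun x y => DY F (x, y) * W x y) cDYW hL0 0 L
      rw [hsw]
      have hinner : ∀ y ∈ uIcc (0:ℝ) L, (∫ x in (0:ℝ)..L, DY F (x, y) * W x y)
          = (1/2) * (pxInvStar (pdy v) L y)^2 := by
        intro y _
        have hftc : (∫ x in (0:ℝ)..L, DY F (x, y) * W x y)
            = W L y * W L y / 2 - W 0 y * W 0 y / 2 := by
          apply intervalIntegral.integral_eq_sub_of_hasDerivAt
          · intro x _
            have h := ((HWx y x).mul (HWx y x)).div_const 2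
            convert h using 1
            · rfl
            · rfl
            ring
          · exact ((sliceXc _ cDY1 y).mul (sliceXc _ cW y)).intervalIntegrable _ _
        rw [hftc, hW00 y, eW L y]
        ring
      rw [intervalIntegral.integral_congr (g := fun y =>
        (1/2) * (pxInvStar (pdy v) L y)^2) hinner, intervalIntegral.integral_const_mul]
      ring
    -- assemble
    calc (∫ x in (0:ℝ)..L, ∫ y in (0:ℝ)..L,
            v x y * (pdx v x y + pdx3 v x y + pxInvStar (pdy2 v) x y))
        = ∫ x in (0:ℝ)..L, ((∫ y in (0:ℝ)..L, v x y * DX F (x, y))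
            + (∫ y in (0:ℝ)..L, v x y * DX (DX (DX F)) (x, y))
            + (∫ y in (0:ℝ)..L, v x y * P x y)) := by
          simp only [e0]
          exact intervalIntegral.integral_congr fun x _ => split1 x
      _ = (∫ x in (0:ℝ)..L, ∫ y in (0:ℝ)..L, v x y * DX F (x, y))
            + (∫ x in (0:ℝ)..L, ∫ y in (0:ℝ)..L, v x y * DX (DX (DX F)) (x, y))
            + (∫ x in (0:ℝ)..L, ∫ y in (0:ℝ)..L, v x y * P x y) := by
          rw [intervalIntegral.integral_add ((cS1.intervalIntegrable 0 L).add
            (cS2.intervalIntegrable 0 L)) (cS3.intervalIntegrable 0 L),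
            intervalIntegral.integral_add (cS1.intervalIntegrable 0 L)
            (cS2.intervalIntegrable 0 L)]
      _ = -((1 - α^2)/2) * (∫ y in (0:ℝ)..L, (pdx v L y)^2)
            - β * (∫ x in (0:ℝ)..L, (v x L)^2)
            - (1/2) * (∫ y in (0:ℝ)..L, (pxInvStar (pdy v) L y)^2) := by
          rw [T1, T2, T3]
          ring
  refine ⟨key, ?_⟩
  rw [key]
  have h1 : 0 ≤ ∫ y in (0:ℝ)..L, (pdx v L y)^2 :=
    intervalIntegral.integral_nonneg hL0 fun u _ => sq_nonneg _
  have h2 : 0 ≤ ∫ x in (0:ℝ)..L, (v x L)^2 :=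
    intervalIntegral.integral_nonneg hL0 fun u _ => sq_nonneg _
  have h3 : 0 ≤ ∫ y in (0:ℝ)..L, (pxInvStar (pdy v) L y)^2 :=
    intervalIntegral.integral_nonneg hL0 fun u _ => sq_nonneg _
  have hα2 : α^2 ≤ 1 := by nlinarith [sq_abs α, abs_nonneg α]
  nlinarith [mul_nonneg (by linarith : (0:ℝ) ≤ (1 - α^2)/2) h1, mul_nonneg hβ.le h2]

end
end

section
/- Let L > 0 and let u : [0,L]² → ℝ be of class C³ with u(0,y) = u(L,y) = 0 for all y ∈ [0,L]. Then ∫_Ω x · u(x,y) · u_xxx(x,y) dx dy = (3/2) ∫_Ω u_x(x,y)² dx dy − (L/2) ∫₀^L u_x(L,y)² dy. -/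
open MeasureTheory Real

noncomputable section

/-- partial derivative in x of a function on the plane -/
def pX (F : ℝ × ℝ → ℝ) (p : ℝ × ℝ) : ℝ := fderiv ℝ F p (1, 0)

lemma pX_contDiff {n m : WithTop ℕ∞} {F : ℝ × ℝ → ℝ} (hF : ContDiff ℝ n F)
    (h : m + 1 ≤ n) : ContDiff ℝ m (pX F) :=
  (hF.fderiv_right h).clm_apply contDiff_const

lemma slice_hasDerivAt {F : ℝ × ℝ → ℝ} (hF : Differentiable ℝ F) (x y : ℝ) :
    HasDerivAt (fun x' => F (x', y)) (pX F (x, y)) x := by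
  have h1 : HasDerivAt (fun x' : ℝ => (x', y)) ((1 : ℝ), (0 : ℝ)) x :=
    (hasDerivAt_id x).prodMk (hasDerivAt_const x y)
  exact (hF (x, y)).hasFDerivAt.comp_hasDerivAt x h1

lemma slice_deriv {F : ℝ × ℝ → ℝ} (hF : Differentiable ℝ F) (y : ℝ) :
    deriv (fun x' => F (x', y)) = fun x => pX F (x, y) :=
  funext fun x => (slice_hasDerivAt hF x y).deriv

lemma oneD (L : ℝ) (hL : 0 < L) (f : ℝ → ℝ) (hf : ContDiff ℝ 3 f)
    (h0 : f 0 = 0) (hfL : f L = 0) :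
    ∫ x in (0:ℝ)..L, x * f x * iteratedDeriv 3 f x
      = 3/2 * (∫ x in (0:ℝ)..L, (deriv f x)^2) - L/2 * (deriv f L)^2 := by
  have h3 : (3 : WithTop ℕ∞) = 2 + 1 := by norm_num
  obtain ⟨hd0, -, hf1⟩ := contDiff_succ_iff_deriv.mp (h3 ▸ hf)
  have h2 : (2 : WithTop ℕ∞) = 1 + 1 := by norm_num
  obtain ⟨hd1, -, hf2⟩ := contDiff_succ_iff_deriv.mp (h2 ▸ hf1)
  obtain ⟨hd2, hc3⟩ := contDiff_one_iff_deriv.mp hf2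
  set f1 := deriv f with hf1d
  set f2 := deriv f1 with hf2d
  set f3 := deriv f2 with hf3d
  have hc0 : Continuous f := hf.continuous
  have hc1 : Continuous f1 := hf1.continuous
  have hc2 : Continuous f2 := hf2.continuous
  have hIter : ∀ x, iteratedDeriv 3 f x = f3 x := by
    intro x; simp [iteratedDeriv_succ, iteratedDeriv_zero, hf1d, hf2d, hf3d]
  have hA : ∫ x in (0:ℝ)..L, (x * f x) * f3 x
      = (L * f L) * f2 L - (0 * f 0) * f2 0
        - ∫ x in (0:ℝ)..L, (f x + x * f1 x) * f2 x := by
    apply intervalIntegral.integral_mul_deriv_eq_deriv_mul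
    · intro x hx
      simpa using (hasDerivAt_id x).fun_mul (hd0 x).hasDerivAt
    · intro x hx; exact (hd2 x).hasDerivAt
    · exact (hc0.add (continuous_id.mul hc1)).intervalIntegrable 0 L
    · exact hc3.intervalIntegrable 0 L
  have hB : ∫ x in (0:ℝ)..L, f x * f2 x
      = f L * f1 L - f 0 * f1 0 - ∫ x in (0:ℝ)..L, f1 x * f1 x := by
    apply intervalIntegral.integral_mul_deriv_eq_deriv_mul
    · intro x hx; exact (hd0 x).hasDerivAt
    · intro x hx; exact (hd1 x).hasDerivAt
    · exact hc1.intervalIntegrable 0 L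
    · exact hc2.intervalIntegrable 0 L
  have hC : ∫ x in (0:ℝ)..L, (x * f1 x) * f2 x
      = (L * f1 L) * f1 L - (0 * f1 0) * f1 0
        - ∫ x in (0:ℝ)..L, (f1 x + x * f2 x) * f1 x := by
    apply intervalIntegral.integral_mul_deriv_eq_deriv_mul
    · intro x hx
      simpa using (hasDerivAt_id x).fun_mul (hd1 x).hasDerivAt
    · intro x hx; exact (hd1 x).hasDerivAt
    · exact (hc1.add (continuous_id.mul hc2)).intervalIntegrable 0 L
    · exact hc2.intervalIntegrable 0 L
  have hI1 : IntervalIntegrable (fun x => f x * f2 x) volume 0 L :=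
    (hc0.mul hc2).intervalIntegrable 0 L
  have hI2 : IntervalIntegrable (fun x => (x * f1 x) * f2 x) volume 0 L :=
    ((continuous_id.mul hc1).mul hc2).intervalIntegrable 0 L
  have hI3 : IntervalIntegrable (fun x => f1 x * f1 x) volume 0 L :=
    (hc1.mul hc1).intervalIntegrable 0 L
  have hsplitA : ∫ x in (0:ℝ)..L, (f x + x * f1 x) * f2 x
      = (∫ x in (0:ℝ)..L, f x * f2 x) + ∫ x in (0:ℝ)..L, (x * f1 x) * f2 x := by
    rw [← intervalIntegral.integral_add hI1 hI2]
    congr 1; funext x; ring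
  have hsplitC : ∫ x in (0:ℝ)..L, (f1 x + x * f2 x) * f1 x
      = (∫ x in (0:ℝ)..L, f1 x * f1 x) + ∫ x in (0:ℝ)..L, (x * f1 x) * f2 x := by
    rw [← intervalIntegral.integral_add hI3 hI2]
    congr 1; funext x; ring
  have hsq : ∫ x in (0:ℝ)..L, (deriv f x)^2 = ∫ x in (0:ℝ)..L, f1 x * f1 x := by
    congr 1; funext x; rw [← hf1d]; ring
  rw [hfL, h0] at hA hB
  rw [hsplitA] at hA
  rw [hsplitC] at hC
  have hgoal : ∫ x in (0:ℝ)..L, x * f x * iteratedDeriv 3 f x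
      = ∫ x in (0:ℝ)..L, (x * f x) * f3 x := by
    congr 1; funext x; rw [hIter x]
  rw [hgoal, hA, hB, hsq, sq (f1 L)]
  linarith [hC]

lemma swap_cont (L : ℝ) (hL : 0 ≤ L) (g : ℝ → ℝ → ℝ)
    (hg : Continuous fun p : ℝ × ℝ => g p.1 p.2) :
    ∫ x in (0:ℝ)..L, ∫ y in (0:ℝ)..L, g x y
      = ∫ y in (0:ℝ)..L, ∫ x in (0:ℝ)..L, g x y := by
  simp only [intervalIntegral.integral_of_le hL]
  apply MeasureTheory.integral_integral_swap
  rw [Measure.prod_restrict]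
  apply ((hg.continuousOn).integrableOn_compact (isCompact_Icc.prod isCompact_Icc)).mono_set
  exact Set.prod_mono Set.Ioc_subset_Icc_self Set.Ioc_subset_Icc_self

/-- Morawetz multiplier identity for the third-order term:
`∫_Ω x u u_xxx dx dy = (3/2) ∫_Ω u_x² dx dy - (L/2) ∫₀^L u_x(L,y)² dy`
for `u` of class `C³` with `u(0,y) = u(L,y) = 0`. -/
theorem kp_morawetz_third_order (L : ℝ) (hL : 0 < L)
    (u : ℝ → ℝ → ℝ) (hu : ContDiff ℝ 3 (fun p : ℝ × ℝ => u p.1 p.2))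
    (hb : ∀ y ∈ Set.Icc (0:ℝ) L, u 0 y = 0 ∧ u L y = 0) :
    (∫ x in (0:ℝ)..L, ∫ y in (0:ℝ)..L, x * u x y * pdx3 u x y)
      = (3/2) * (∫ x in (0:ℝ)..L, ∫ y in (0:ℝ)..L, (pdx u x y)^2)
        - (L/2) * (∫ y in (0:ℝ)..L, (pdx u L y)^2) := by
  set F : ℝ × ℝ → ℝ := fun p => u p.1 p.2 with hF
  have hd0 : Differentiable ℝ F := hu.differentiable (by norm_num)
  have hP1 : ContDiff ℝ 2 (pX F) := pX_contDiff hu (by norm_num)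
  have hP2 : ContDiff ℝ 1 (pX (pX F)) := pX_contDiff hP1 (by norm_num)
  have hP3 : Continuous (pX (pX (pX F))) :=
    (pX_contDiff hP2 (by norm_num : (0 : WithTop ℕ∞) + 1 ≤ 1)).continuous
  have hd1 : Differentiable ℝ (pX F) := hP1.differentiable (by norm_num)
  have hd2 : Differentiable ℝ (pX (pX F)) := hP2.differentiable (by norm_num)
  -- identify pdx and pdx3 with pX iterates
  have hpdx : ∀ x y, pdx u x y = pX F (x, y) := by
    intro x y
    exact (slice_hasDerivAt hd0 x y).deriv
  have hpdx3 : ∀ x y, pdx3 u x y = pX (pX (pX F)) (x, y) := by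
    intro x y
    show iteratedDeriv 3 (fun x' => F (x', y)) x = _
    simp only [iteratedDeriv_succ, iteratedDeriv_zero,
      show (3 : ℕ) = 0 + 1 + 1 + 1 from rfl]
    rw [slice_deriv hd0 y, slice_deriv hd1 y, slice_deriv hd2 y]
  -- continuity of the integrands
  have hc1 : Continuous fun p : ℝ × ℝ => p.1 * u p.1 p.2 * pdx3 u p.1 p.2 := by
    have : (fun p : ℝ × ℝ => p.1 * u p.1 p.2 * pdx3 u p.1 p.2)
        = fun p : ℝ × ℝ => p.1 * F p * pX (pX (pX F)) p := by
      funext p; rw [hpdx3 p.1 p.2]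
    rw [this]
    exact (continuous_fst.mul hu.continuous).mul hP3
  have hc2 : Continuous fun p : ℝ × ℝ => (pdx u p.1 p.2)^2 := by
    have : (fun p : ℝ × ℝ => (pdx u p.1 p.2)^2)
        = fun p : ℝ × ℝ => (pX F p)^2 := by
      funext p; rw [hpdx p.1 p.2]
    rw [this]
    exact hP1.continuous.pow 2
  -- Fubini
  have s1 : (∫ x in (0:ℝ)..L, ∫ y in (0:ℝ)..L, x * u x y * pdx3 u x y)
      = ∫ y in (0:ℝ)..L, ∫ x in (0:ℝ)..L, x * u x y * pdx3 u x y :=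
    swap_cont L hL.le (fun x y => x * u x y * pdx3 u x y) hc1
  have s2 : (∫ x in (0:ℝ)..L, ∫ y in (0:ℝ)..L, (pdx u x y)^2)
      = ∫ y in (0:ℝ)..L, ∫ x in (0:ℝ)..L, (pdx u x y)^2 :=
    swap_cont L hL.le (fun x y => (pdx u x y)^2) hc2
  rw [s1, s2]
  -- apply the 1D identity for each y
  have key : ∀ y ∈ Set.uIcc (0:ℝ) L,
      (∫ x in (0:ℝ)..L, x * u x y * pdx3 u x y)
        = 3/2 * (∫ x in (0:ℝ)..L, (pdx u x y)^2) - L/2 * (pdx u L y)^2 := by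
    intro y hy
    rw [Set.uIcc_of_le hL.le] at hy
    have hslice : ContDiff ℝ 3 (fun x => u x y) :=
      hu.comp (contDiff_id.prodMk contDiff_const)
    have := oneD L hL (fun x => u x y) hslice (hb y hy).1 (hb y hy).2
    simpa only [pdx, pdx3] using this
  rw [intervalIntegral.integral_congr key]
  -- split the y-integral
  have hiA : IntervalIntegrable
      (fun y => 3/2 * (∫ x in (0:ℝ)..L, (pdx u x y)^2)) volume 0 L := by
    apply Continuous.intervalIntegrable
    apply continuous_const.mul
    exact intervalIntegral.continuous_parametric_intervalIntegral_of_continuous'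
      (f := fun y x => (pdx u x y)^2)
      (by exact hc2.comp (continuous_snd.prodMk continuous_fst)) 0 L
  have hiB : IntervalIntegrable
      (fun y => L/2 * (pdx u L y)^2) volume 0 L := by
    apply Continuous.intervalIntegrable
    apply continuous_const.mul
    exact (hc2.comp (continuous_const.prodMk continuous_id)).congr (fun y => rfl)
  rw [intervalIntegral.integral_sub hiA hiB,
    intervalIntegral.integral_const_mul, intervalIntegral.integral_const_mul]
end
end

section
/- Let L > 0 and let λ ∈ ℝ with λ ≠ 0. Suppose u : [0,L]² → ℝ is of class C³ and satisfies the spectral equation λ u(x,y) + u_x(x,y) + u_xxx(x,y) − ∫ₓ^L u_yy(s,y) ds = 0 for all (x,y) ∈ Ω, together with the boundary conditions u(0,y) = u(L,y) = 0 and u_x(0,y) = u_x(L,y) = 0 for all y ∈ [0,L], u(x,L) = 0, u_y(x,L) = 0 and u_y(x,0) = 0 for all x ∈ [0,L], and ∫₀^L u_y(s,y) ds = 0 for all y ∈ [0,L]. Then u is identically zero on [0,L]². -/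
open MeasureTheory Real Set Function

noncomputable section

/-- x-partial derivative of a function on the plane. -/
def PX (f : ℝ × ℝ → ℝ) (p : ℝ × ℝ) : ℝ := fderiv ℝ f p (1, 0)

/-- y-partial derivative of a function on the plane. -/
def PY (f : ℝ × ℝ → ℝ) (p : ℝ × ℝ) : ℝ := fderiv ℝ f p (0, 1)

theorem PX.contDiff {n m : WithTop ℕ∞} {f : ℝ × ℝ → ℝ} (hf : ContDiff ℝ m f) (hmn : n + 1 ≤ m) :
    ContDiff ℝ n (PX f) :=
  (hf.fderiv_right hmn).clm_apply contDiff_const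

theorem PY.contDiff {n m : WithTop ℕ∞} {f : ℝ × ℝ → ℝ} (hf : ContDiff ℝ m f) (hmn : n + 1 ≤ m) :
    ContDiff ℝ n (PY f) :=
  (hf.fderiv_right hmn).clm_apply contDiff_const

theorem PX.hasDerivAt {f : ℝ × ℝ → ℝ} (hf : Differentiable ℝ f) (x y : ℝ) :
    HasDerivAt (fun x' => f (x', y)) (PX f (x, y)) x := by
  have h1 : HasDerivAt (fun x' : ℝ => (x', y)) ((1 : ℝ), (0 : ℝ)) x := by
    simpa using (hasDerivAt_id x).prodMk (hasDerivAt_const x y)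
  exact (hf (x, y)).hasFDerivAt.comp_hasDerivAt x h1

theorem PY.hasDerivAt {f : ℝ × ℝ → ℝ} (hf : Differentiable ℝ f) (x y : ℝ) :
    HasDerivAt (fun y' => f (x, y')) (PY f (x, y)) y := by
  have h1 : HasDerivAt (fun y' : ℝ => (x, y')) ((0 : ℝ), (1 : ℝ)) y := by
    simpa using (hasDerivAt_const y x).prodMk (hasDerivAt_id y)
  exact (hf (x, y)).hasFDerivAt.comp_hasDerivAt y h1

theorem extend_zero {f : ℝ → ℝ} (hf : Continuous f) {L : ℝ} (hL : 0 < L)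
    (h : ∀ x ∈ Set.Ioo (0:ℝ) L, f x = 0) : ∀ x ∈ Set.Icc (0:ℝ) L, f x = 0 := by
  have heqon : Set.EqOn f 0 (Set.Ioo 0 L) := fun x hx => h x hx
  have hcl : Set.EqOn f 0 (closure (Set.Ioo (0:ℝ) L)) := heqon.closure hf continuous_const
  intro x hx
  have := hcl (by rwa [closure_Ioo hL.ne] : x ∈ closure (Set.Ioo (0:ℝ) L))
  simpa using this

theorem swap_integral_cont {f : ℝ → ℝ → ℝ} (hf : Continuous (uncurry f))
    {a b c d : ℝ} (hab : a ≤ b) (hcd : c ≤ d) :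
    (∫ x in a..b, ∫ y in c..d, f x y) = ∫ y in c..d, ∫ x in a..b, f x y := by
  simp only [intervalIntegral.integral_of_le hab, intervalIntegral.integral_of_le hcd]
  apply MeasureTheory.integral_integral_swap
  rw [Measure.prod_restrict]
  have hsub : Ioc a b ×ˢ Ioc c d ⊆ Icc a b ×ˢ Icc c d :=
    Set.prod_mono Ioc_subset_Icc_self Ioc_subset_Icc_self
  exact ((hf.continuousOn).integrableOn_compact
    (isCompact_Icc.prod isCompact_Icc)).mono_set hsub

theorem swap_integral_cont' {f : ℝ → ℝ → ℝ} (hf : Continuous (uncurry f))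
    (a b c d : ℝ) :
    (∫ x in a..b, ∫ y in c..d, f x y) = ∫ y in c..d, ∫ x in a..b, f x y := by
  rcases le_total a b with hab | hab <;> rcases le_total c d with hcd | hcd
  · exact swap_integral_cont hf hab hcd
  · simp only [intervalIntegral.integral_symm d c, intervalIntegral.integral_neg]
    rw [swap_integral_cont hf hab hcd]
  · simp only [intervalIntegral.integral_symm b a, intervalIntegral.integral_neg]
    rw [swap_integral_cont hf hab hcd]
  · simp only [intervalIntegral.integral_symm b a, intervalIntegral.integral_symm d c,
      intervalIntegral.integral_neg, neg_neg]
    rw [swap_integral_cont hf hab hcd]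

theorem zero_of_integral_zero {f : ℝ → ℝ} (hf : Continuous f) (hpos : ∀ x, 0 ≤ f x)
    {L : ℝ} (hL : 0 < L) (h : (∫ x in (0:ℝ)..L, f x) = 0) :
    ∀ x ∈ Icc (0:ℝ) L, f x = 0 := by
  have hIoo : ∀ x ∈ Ioo (0:ℝ) L, f x = 0 := by
    intro x hx
    by_contra hne
    have hopen : IsOpen (support f ∩ Ioo 0 L) := (hf.isOpen_support).inter isOpen_Ioo
    have hne' : (support f ∩ Ioo 0 L).Nonempty := ⟨x, hne, hx⟩
    have hpos2 : 0 < (volume : Measure ℝ) (support f ∩ Ioc 0 L) :=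
      lt_of_lt_of_le (hopen.measure_pos volume hne')
        (measure_mono (inter_subset_inter_right _ Ioo_subset_Ioc_self))
    have : 0 < ∫ x in (0:ℝ)..L, f x := by
      rw [intervalIntegral.integral_pos_iff_support_of_nonneg_ae
        (Filter.Eventually.of_forall hpos) (hf.intervalIntegrable 0 L)]
      exact ⟨hL, hpos2⟩
    linarith
  have heqon : EqOn f 0 (Ioo 0 L) := fun x hx => hIoo x hx
  have hcl : EqOn f 0 (closure (Ioo (0:ℝ) L)) := heqon.closure hf continuous_const
  intro x hx
  have := hcl (by rwa [closure_Ioo hL.ne] : x ∈ closure (Ioo (0:ℝ) L))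
  simpa using this

/-- value of `x ↦ ∫ s in x..L, g (s,y)` as difference of primitives -/
theorem prim_sub {g : ℝ × ℝ → ℝ} (hg : Continuous g) (L : ℝ) (x y : ℝ) :
    (∫ s in x..L, g (s, y)) =
      (∫ s in (0:ℝ)..L, g (s, y)) - ∫ s in (0:ℝ)..x, g (s, y) := by
  have i1 : IntervalIntegrable (fun s => g (s, y)) volume 0 x :=
    Continuous.intervalIntegrable (by fun_prop) 0 x
  have i2 : IntervalIntegrable (fun s => g (s, y)) volume x L :=
    Continuous.intervalIntegrable (by fun_prop) x L
  have := intervalIntegral.integral_add_adjacent_intervals i1 i2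
  linarith

set_option maxHeartbeats 1000000 in
theorem cont_prim {g : ℝ × ℝ → ℝ} (hg : Continuous g) (L : ℝ) :
    Continuous (fun p : ℝ × ℝ => ∫ s in p.1..L, g (s, p.2)) := by
  have h1 : Continuous (fun p : ℝ × ℝ => ∫ s in (0:ℝ)..L, g (s, p.2)) :=
    intervalIntegral.continuous_parametric_intervalIntegral_of_continuous
      (f := fun (p : ℝ × ℝ) s => g (s, p.2)) (by fun_prop) continuous_const
  have h2' : Continuous (fun p : ℝ × ℝ => ∫ s in (0:ℝ)..p.1, g (s, p.2)) :=
    intervalIntegral.continuous_parametric_intervalIntegral_of_continuous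
      (f := fun (p : ℝ × ℝ) s => g (s, p.2)) (by fun_prop) continuous_fst
  have heq : (fun p : ℝ × ℝ => ∫ s in p.1..L, g (s, p.2)) =
      fun p => (∫ s in (0:ℝ)..L, g (s, p.2)) - ∫ s in (0:ℝ)..p.1, g (s, p.2) :=
    funext fun p => prim_sub hg L p.1 p.2
  rw [heq]; exact h1.sub h2'

theorem hasDerivAt_prim {g : ℝ × ℝ → ℝ} (hg : Continuous g) (L x y : ℝ) :
    HasDerivAt (fun x' => ∫ s in x'..L, g (s, y)) (-(g (x, y))) x := by
  have hc : Continuous fun s => g (s, y) := hg.comp (continuous_id.prodMk continuous_const)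
  have i1 : IntervalIntegrable (fun s => g (s, y)) volume 0 x :=
    Continuous.intervalIntegrable (by fun_prop) 0 x
  have h := intervalIntegral.integral_hasDerivAt_right i1
    (hc.stronglyMeasurableAtFilter volume (nhds x)) hc.continuousAt
  have heq : (fun x' => ∫ s in x'..L, g (s, y)) =
      fun x' => (∫ s in (0:ℝ)..L, g (s, y)) - ∫ s in (0:ℝ)..x', g (s, y) :=
    funext fun x' => prim_sub hg L x' y
  rw [heq]
  exact h.const_sub (∫ s in (0:ℝ)..L, g (s, y))

/-- differentiation of a parametric interval integral in the parameter -/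
theorem hasDerivAt_param {g h : ℝ × ℝ → ℝ} (hg : Continuous g) (hh : Continuous h)
    (hder : ∀ x y, HasDerivAt (fun y' => g (x, y')) (h (x, y)) y) (a b x y : ℝ) :
    HasDerivAt (fun y' => ∫ s in a..b, g (s, y')) (∫ s in a..b, h (s, y)) y := by
  have key : ∀ y', (∫ s in a..b, g (s, y')) =
      (∫ s in a..b, g (s, 0)) + ∫ t in (0:ℝ)..y', (∫ s in a..b, h (s, t)) := by
    intro y'
    have h1 : ∀ s, g (s, y') - g (s, 0) = ∫ t in (0:ℝ)..y', h (s, t) := by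
      intro s
      have ih : IntervalIntegrable (fun t => h (s, t)) volume 0 y' :=
        Continuous.intervalIntegrable (by fun_prop) 0 y'
      exact (intervalIntegral.integral_eq_sub_of_hasDerivAt (fun t _ => hder s t) ih).symm
    have h2 : (∫ s in a..b, (g (s, y') - g (s, 0))) =
        ∫ s in a..b, ∫ t in (0:ℝ)..y', h (s, t) :=
      intervalIntegral.integral_congr fun s _ => h1 s
    have ig1 : IntervalIntegrable (fun s => g (s, y')) volume a b :=
      Continuous.intervalIntegrable (by fun_prop) a b
    have ig2 : IntervalIntegrable (fun s => g (s, 0)) volume a b :=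
      Continuous.intervalIntegrable (by fun_prop) a b
    rw [intervalIntegral.integral_sub ig1 ig2,
      swap_integral_cont' (f := fun s t => h (s, t)) (by exact hh) a b 0 y'] at h2
    linarith
  have hcont : Continuous (fun t => ∫ s in a..b, h (s, t)) :=
    intervalIntegral.continuous_parametric_intervalIntegral_of_continuous'
      (f := fun t s => h (s, t)) (by exact hh.comp continuous_swap) a b
  have hD : HasDerivAt (fun y' => ∫ t in (0:ℝ)..y', (∫ s in a..b, h (s, t)))
      (∫ s in a..b, h (s, y)) y :=
    intervalIntegral.integral_hasDerivAt_right (hcont.intervalIntegrable 0 y)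
      (hcont.stronglyMeasurableAtFilter volume (nhds y)) hcont.continuousAt
  have heq : (fun y' => ∫ s in a..b, g (s, y')) =
      fun y' => (∫ s in a..b, g (s, 0)) + ∫ t in (0:ℝ)..y', (∫ s in a..b, h (s, t)) :=
    funext key
  rw [heq]
  exact hD.const_add (∫ s in a..b, g (s, 0))


theorem cont_prim_gen {g : ℝ × ℝ → ℝ} (hg : Continuous g) (L : ℝ)
    {α : Type} [TopologicalSpace α] {a b : α → ℝ} (ha : Continuous a) (hb : Continuous b) :
    Continuous fun z : α => ∫ s in a z..L, g (s, b z) := by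
  have h1 : Continuous fun z : α => ∫ s in (0:ℝ)..L, g (s, b z) :=
    intervalIntegral.continuous_parametric_intervalIntegral_of_continuous
      (f := fun z s => g (s, b z)) (by fun_prop) continuous_const
  have h2 : Continuous fun z : α => ∫ s in (0:ℝ)..a z, g (s, b z) :=
    intervalIntegral.continuous_parametric_intervalIntegral_of_continuous
      (f := fun z s => g (s, b z)) (by fun_prop) ha
  have heq : (fun z : α => ∫ s in a z..L, g (s, b z))
      = fun z => (∫ s in (0:ℝ)..L, g (s, b z)) - ∫ s in (0:ℝ)..a z, g (s, b z) :=
    funext fun z => prim_sub hg L (a z) (b z)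
  rw [heq]
  exact h1.sub h2

theorem cont_prim_slice {g : ℝ × ℝ → ℝ} (hg : Continuous g) (L y : ℝ) :
    Continuous fun x : ℝ => ∫ s in x..L, g (s, y) := by
  have h1 : Continuous fun x : ℝ => ∫ s in (0:ℝ)..x, g (s, y) :=
    intervalIntegral.continuous_parametric_intervalIntegral_of_continuous
      (f := fun (_ : ℝ) s => g (s, y)) (by fun_prop) continuous_id
  have heq : (fun x : ℝ => ∫ s in x..L, g (s, y))
      = fun x => (∫ s in (0:ℝ)..L, g (s, y)) - ∫ s in (0:ℝ)..x, g (s, y) :=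
    funext fun x => prim_sub hg L x y
  rw [heq]
  exact continuous_const.sub h1

set_option maxHeartbeats 2000000 in
/-- No nontrivial solution of the spectral problem (with drift term, `λ ≠ 0`):
if `λ u + u_x + u_xxx - ∫ₓ^L u_yy(s,y) ds = 0` on `Ω` with the over-determined
boundary conditions, then `u ≡ 0` on `[0,L]²`. -/
theorem kp_spectral_uniqueness_drift (L lam : ℝ) (hL : 0 < L) (hlam : lam ≠ 0)
    (u : ℝ → ℝ → ℝ) (hu : ContDiff ℝ 3 (fun p : ℝ × ℝ => u p.1 p.2))
    (heq : ∀ x ∈ Set.Ioo (0:ℝ) L, ∀ y ∈ Set.Ioo (0:ℝ) L,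
      lam * u x y + pdx u x y + pdx3 u x y - (∫ s in x..L, pdy2 u s y) = 0)
    (hbx : ∀ y ∈ Set.Icc (0:ℝ) L,
      u 0 y = 0 ∧ u L y = 0 ∧ pdx u 0 y = 0 ∧ pdx u L y = 0)
    (hby : ∀ x ∈ Set.Icc (0:ℝ) L, u x L = 0 ∧ pdy u x L = 0 ∧ pdy u x 0 = 0)
    (hint : ∀ y ∈ Set.Icc (0:ℝ) L, (∫ s in (0:ℝ)..L, pdy u s y) = 0) :
    ∀ x ∈ Set.Icc (0:ℝ) L, ∀ y ∈ Set.Icc (0:ℝ) L, u x y = 0 := by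
  set F : ℝ × ℝ → ℝ := fun p => u p.1 p.2 with hFdef
  have hF : ContDiff ℝ 3 F := hu
  have hFdiff : Differentiable ℝ F := hF.differentiable (by norm_num)
  have cF : Continuous F := hF.continuous
  have cdP1 : ContDiff ℝ 2 (PX F) := PX.contDiff hF (by norm_num)
  have cdQ1 : ContDiff ℝ 2 (PY F) := PY.contDiff hF (by norm_num)
  have cdP2 : ContDiff ℝ 1 (PX (PX F)) := PX.contDiff cdP1 (by norm_num)
  have cdQ2 : ContDiff ℝ 1 (PY (PY F)) := PY.contDiff cdQ1 (by norm_num)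
  have cP1 : Continuous (PX F) := cdP1.continuous
  have cQ1 : Continuous (PY F) := cdQ1.continuous
  have cP2 : Continuous (PX (PX F)) := cdP2.continuous
  have cQ2 : Continuous (PY (PY F)) := cdQ2.continuous
  have cP3 : Continuous (PX (PX (PX F))) :=
    (PX.contDiff cdP2 (by norm_num : (0:WithTop ℕ∞) + 1 ≤ 1)).continuous
  -- slice derivatives
  have dP1 : ∀ x y : ℝ, HasDerivAt (fun x' => u x' y) (PX F (x, y)) x :=
    fun x y => PX.hasDerivAt hFdiff x y
  have dP2 : ∀ x y : ℝ, HasDerivAt (fun x' => PX F (x', y)) (PX (PX F) (x, y)) x :=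
    fun x y => PX.hasDerivAt (cdP1.differentiable (by norm_num)) x y
  have dP3 : ∀ x y : ℝ, HasDerivAt (fun x' => PX (PX F) (x', y)) (PX (PX (PX F)) (x, y)) x :=
    fun x y => PX.hasDerivAt (cdP2.differentiable (by norm_num)) x y
  have dQ1 : ∀ x y : ℝ, HasDerivAt (fun y' => u x y') (PY F (x, y)) y :=
    fun x y => PY.hasDerivAt hFdiff x y
  have dQ2 : ∀ x y : ℝ, HasDerivAt (fun y' => PY F (x, y')) (PY (PY F) (x, y)) y :=
    fun x y => PY.hasDerivAt (cdQ1.differentiable (by norm_num)) x y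
  -- identification of the one-variable derivatives
  have epdx : ∀ x y : ℝ, pdx u x y = PX F (x, y) := fun x y => (dP1 x y).deriv
  have epdy : ∀ x y : ℝ, pdy u x y = PY F (x, y) := fun x y => (dQ1 x y).deriv
  have hd1 : ∀ y : ℝ, deriv (fun x' => u x' y) = fun x' => PX F (x', y) :=
    fun y => funext fun z => (dP1 z y).deriv
  have hd2 : ∀ y : ℝ, deriv (fun x' => PX F (x', y)) = fun x' => PX (PX F) (x', y) :=
    fun y => funext fun z => (dP2 z y).deriv
  have hq1 : ∀ x : ℝ, deriv (fun y' => u x y') = fun y' => PY F (x, y') :=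
    fun x => funext fun z => (dQ1 x z).deriv
  have epdx3 : ∀ x y : ℝ, pdx3 u x y = PX (PX (PX F)) (x, y) := by
    intro x y
    show iteratedDeriv 3 (fun x' => u x' y) x = _
    rw [show (3:ℕ) = 2 + 1 from rfl, iteratedDeriv_succ,
      show (2:ℕ) = 1 + 1 from rfl, iteratedDeriv_succ, iteratedDeriv_one, hd1 y, hd2 y]
    exact (dP3 x y).deriv
  have epdy2 : ∀ x y : ℝ, pdy2 u x y = PY (PY F) (x, y) := by
    intro x y
    show iteratedDeriv 2 (fun y' => u x y') y = _
    rw [show (2:ℕ) = 1 + 1 from rfl, iteratedDeriv_succ, iteratedDeriv_one, hq1 x]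
    exact (dQ2 x y).deriv
  -- rewritten hypotheses
  have hbx' : ∀ y ∈ Set.Icc (0:ℝ) L,
      u 0 y = 0 ∧ u L y = 0 ∧ PX F (0, y) = 0 ∧ PX F (L, y) = 0 := by
    intro y hy
    obtain ⟨h1, h2, h3, h4⟩ := hbx y hy
    exact ⟨h1, h2, epdx 0 y ▸ h3, epdx L y ▸ h4⟩
  have hby' : ∀ x ∈ Set.Icc (0:ℝ) L,
      u x L = 0 ∧ PY F (x, L) = 0 ∧ PY F (x, 0) = 0 := by
    intro x hx
    obtain ⟨h1, h2, h3⟩ := hby x hx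
    exact ⟨h1, epdy x L ▸ h2, epdy x 0 ▸ h3⟩
  have hint' : ∀ y ∈ Set.Icc (0:ℝ) L, (∫ s in (0:ℝ)..L, PY F (s, y)) = 0 := by
    intro y hy
    have h1 : (∫ s in (0:ℝ)..L, PY F (s, y)) = ∫ s in (0:ℝ)..L, pdy u s y :=
      intervalIntegral.integral_congr fun s _ => (epdy s y).symm
    rw [h1]; exact hint y hy
  have heq' : ∀ x ∈ Set.Ioo (0:ℝ) L, ∀ y ∈ Set.Ioo (0:ℝ) L,
      lam * u x y + PX F (x, y) + PX (PX (PX F)) (x, y)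
        - (∫ s in x..L, PY (PY F) (s, y)) = 0 := by
    intro x hx y hy
    have h1 : (∫ s in x..L, PY (PY F) (s, y)) = ∫ s in x..L, pdy2 u s y :=
      intervalIntegral.integral_congr fun s _ => (epdy2 s y).symm
    rw [h1, ← epdx x y, ← epdx3 x y]
    exact heq x hx y hy
  -- boundary values of the primitives
  have hV0 : ∀ y ∈ Set.Icc (0:ℝ) L, (∫ s in (0:ℝ)..L, u s y) = 0 := by
    intro y hy
    have hkey : ∀ s : ℝ, u s y = u s L - ∫ t in y..L, PY F (s, t) := by
      intro s
      have ih : IntervalIntegrable (fun t => PY F (s, t)) volume y L :=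
        Continuous.intervalIntegrable (cQ1.comp (continuous_const.prodMk continuous_id)) y L
      have := intervalIntegral.integral_eq_sub_of_hasDerivAt
        (f := fun y' => u s y') (f' := fun t => PY F (s, t)) (fun t _ => dQ1 s t) ih
      linarith
    have hstep : (∫ s in (0:ℝ)..L, u s y)
        = (∫ s in (0:ℝ)..L, u s L) - ∫ s in (0:ℝ)..L, ∫ t in y..L, PY F (s, t) := by
      have hcongr : (∫ s in (0:ℝ)..L, u s y)
          = ∫ s in (0:ℝ)..L, (u s L - ∫ t in y..L, PY F (s, t)) :=
        intervalIntegral.integral_congr fun s _ => hkey s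
      rw [hcongr]
      have i1 : IntervalIntegrable (fun s => u s L) volume 0 L :=
        Continuous.intervalIntegrable (cF.comp (continuous_id.prodMk continuous_const)) 0 L
      have i2 : IntervalIntegrable (fun s => ∫ t in y..L, PY F (s, t)) volume 0 L := by
        apply Continuous.intervalIntegrable
        exact intervalIntegral.continuous_parametric_intervalIntegral_of_continuous'
          (f := fun s t => PY F (s, t)) (by exact cQ1) y L
      exact intervalIntegral.integral_sub i1 i2
    have hswap : (∫ s in (0:ℝ)..L, ∫ t in y..L, PY F (s, t))
        = ∫ t in y..L, ∫ s in (0:ℝ)..L, PY F (s, t) :=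
      swap_integral_cont' (f := fun s t => PY F (s, t)) (by exact cQ1) 0 L y L
    have hz : (∫ t in y..L, ∫ s in (0:ℝ)..L, PY F (s, t)) = 0 := by
      have : (∫ t in y..L, ∫ s in (0:ℝ)..L, PY F (s, t)) = ∫ t in y..L, (0:ℝ) := by
        apply intervalIntegral.integral_congr
        intro t ht
        rw [Set.uIcc_of_le hy.2] at ht
        exact hint' t ⟨le_trans hy.1 ht.1, ht.2⟩
      simpa using this
    have hzL : (∫ s in (0:ℝ)..L, u s L) = 0 := by
      have : (∫ s in (0:ℝ)..L, u s L) = ∫ s in (0:ℝ)..L, (0:ℝ) := by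
        apply intervalIntegral.integral_congr
        intro s hs
        rw [Set.uIcc_of_le hL.le] at hs
        exact (hby' s hs).1
      simpa using this
    rw [hstep, hswap, hz, hzL]
    ring
  -- frequently used continuity facts
  have csliceU : ∀ y : ℝ, Continuous fun x => u x y :=
    fun y => cF.comp (continuous_id.prodMk continuous_const)
  have cG : Continuous (fun p : ℝ × ℝ => ∫ s in p.1..L, PY (PY F) (s, p.2)) := cont_prim cQ2 L
  have cV : Continuous (fun p : ℝ × ℝ => ∫ s in p.1..L, u s p.2) := cont_prim cF L
  have cw : Continuous (fun p : ℝ × ℝ => ∫ s in p.1..L, PY F (s, p.2)) := cont_prim cQ1 L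
  -- Identity A : multiply the equation by u and integrate in x
  have IdA : ∀ y ∈ Set.Ioo (0:ℝ) L,
      lam * (∫ x in (0:ℝ)..L, u x y * u x y)
        = ∫ x in (0:ℝ)..L, u x y * (∫ s in x..L, PY (PY F) (s, y)) := by
    intro y hy
    have hyI : y ∈ Set.Icc (0:ℝ) L := Set.Ioo_subset_Icc_self hy
    have c1 : Continuous fun x : ℝ => u x y := csliceU y
    have c2 : Continuous fun x : ℝ => PX F (x, y) :=
      cP1.comp (continuous_id.prodMk continuous_const)
    have c3 : Continuous fun x : ℝ => PX (PX (PX F)) (x, y) :=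
      cP3.comp (continuous_id.prodMk continuous_const)
    have c4 : Continuous fun x : ℝ => (∫ s in x..L, PY (PY F) (s, y)) :=
      cont_prim_slice cQ2 L y
    have hHcont : Continuous (fun x => lam * (u x y * u x y)
        + (u x y * PX F (x, y) + u x y * PX (PX (PX F)) (x, y))
        - u x y * (∫ s in x..L, PY (PY F) (s, y))) :=
      ((continuous_const.mul (c1.mul c1)).add ((c1.mul c2).add (c1.mul c3))).sub (c1.mul c4)
    have hH : ∀ x ∈ Set.Icc (0:ℝ) L, lam * (u x y * u x y)
        + (u x y * PX F (x, y) + u x y * PX (PX (PX F)) (x, y))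
        - u x y * (∫ s in x..L, PY (PY F) (s, y)) = 0 := by
      apply extend_zero hHcont hL
      intro x hx
      linear_combination (u x y) * (heq' x hx y hy)
    have hzero : (∫ x in (0:ℝ)..L, (lam * (u x y * u x y)
        + (u x y * PX F (x, y) + u x y * PX (PX (PX F)) (x, y))
        - u x y * (∫ s in x..L, PY (PY F) (s, y)))) = 0 := by
      have hcongr : (∫ x in (0:ℝ)..L, (lam * (u x y * u x y)
          + (u x y * PX F (x, y) + u x y * PX (PX (PX F)) (x, y))
          - u x y * (∫ s in x..L, PY (PY F) (s, y)))) = ∫ x in (0:ℝ)..L, (0:ℝ) :=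
        intervalIntegral.integral_congr fun x hx =>
          hH x (by rwa [Set.uIcc_of_le hL.le] at hx)
      simpa using hcongr
    have hPhi : ∀ x ∈ Set.uIcc (0:ℝ) L, HasDerivAt
        (fun x' => u x' y * PX (PX F) (x', y) - (PX F (x', y) * PX F (x', y))/2
          + (u x' y * u x' y)/2)
        (u x y * PX F (x, y) + u x y * PX (PX (PX F)) (x, y)) x := by
      intro x _
      have hA := (dP1 x y).mul (dP3 x y)
      have hB := (dP2 x y).mul (dP2 x y)
      have hC := (dP1 x y).mul (dP1 x y)
      have hcomb := (hA.sub (hB.div_const 2)).add (hC.div_const 2)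
      exact hcomb.congr_deriv (by ring)
    have hFTC := intervalIntegral.integral_eq_sub_of_hasDerivAt hPhi
      (Continuous.intervalIntegrable ((c1.mul c2).add (c1.mul c3)) 0 L)
    beta_reduce at hFTC
    obtain ⟨hb1, hb2, hb3, hb4⟩ := hbx' y hyI
    rw [hb1, hb2, hb3, hb4] at hFTC
    have hmid : (∫ x in (0:ℝ)..L,
        (u x y * PX F (x, y) + u x y * PX (PX (PX F)) (x, y))) = 0 := by
      rw [hFTC]; ring
    have iA : IntervalIntegrable (fun x => lam * (u x y * u x y)
        + (u x y * PX F (x, y) + u x y * PX (PX (PX F)) (x, y))) volume 0 L :=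
      Continuous.intervalIntegrable
        ((continuous_const.mul (c1.mul c1)).add ((c1.mul c2).add (c1.mul c3))) 0 L
    have iB : IntervalIntegrable
        (fun x => u x y * (∫ s in x..L, PY (PY F) (s, y))) volume 0 L :=
      Continuous.intervalIntegrable (c1.mul c4) 0 L
    have i1 : IntervalIntegrable (fun x => lam * (u x y * u x y)) volume 0 L :=
      Continuous.intervalIntegrable (continuous_const.mul (c1.mul c1)) 0 L
    have i2 : IntervalIntegrable
        (fun x => u x y * PX F (x, y) + u x y * PX (PX (PX F)) (x, y)) volume 0 L :=
      Continuous.intervalIntegrable ((c1.mul c2).add (c1.mul c3)) 0 L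
    rw [intervalIntegral.integral_sub iA iB, intervalIntegral.integral_add i1 i2,
      intervalIntegral.integral_const_mul, hmid] at hzero
    linarith
  -- Identity B : integration by parts in x for the nonlocal term
  have IdB : ∀ y ∈ Set.Icc (0:ℝ) L,
      (∫ x in (0:ℝ)..L, u x y * (∫ s in x..L, PY (PY F) (s, y)))
        = -∫ x in (0:ℝ)..L, (∫ s in x..L, u s y) * PY (PY F) (x, y) := by
    intro y hy
    have c1 : Continuous fun x : ℝ => u x y := csliceU y
    have c4 : Continuous fun x : ℝ => (∫ s in x..L, PY (PY F) (s, y)) :=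
      cont_prim_slice cQ2 L y
    have c5 : Continuous fun x : ℝ => (∫ s in x..L, u s y) :=
      cont_prim_slice cF L y
    have c6 : Continuous fun x : ℝ => PY (PY F) (x, y) :=
      cQ2.comp (continuous_id.prodMk continuous_const)
    have hPsi : ∀ x ∈ Set.uIcc (0:ℝ) L, HasDerivAt
        (fun x' => (∫ s in x'..L, u s y) * (∫ s in x'..L, PY (PY F) (s, y)))
        (-(u x y * (∫ s in x..L, PY (PY F) (s, y)))
          - (∫ s in x..L, u s y) * PY (PY F) (x, y)) x := by
      intro x _
      have h1 := hasDerivAt_prim cF L x y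
      have h2 := hasDerivAt_prim cQ2 L x y
      have hcomb := h1.mul h2
      exact hcomb.congr_deriv (by ring)
    have hFTC := intervalIntegral.integral_eq_sub_of_hasDerivAt hPsi
      (Continuous.intervalIntegrable (((c1.mul c4).neg).sub (c5.mul c6)) 0 L)
    beta_reduce at hFTC
    rw [intervalIntegral.integral_same, hV0 y hy] at hFTC
    simp only [zero_mul, mul_zero, sub_zero, zero_sub] at hFTC
    have iA : IntervalIntegrable
        (fun x => -(u x y * (∫ s in x..L, PY (PY F) (s, y)))) volume 0 L :=
      Continuous.intervalIntegrable ((c1.mul c4).neg) 0 L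
    have iB : IntervalIntegrable
        (fun x => (∫ s in x..L, u s y) * PY (PY F) (x, y)) volume 0 L :=
      Continuous.intervalIntegrable (c5.mul c6) 0 L
    rw [intervalIntegral.integral_sub iA iB, intervalIntegral.integral_neg] at hFTC
    linarith
  -- continuity in y of the two x-integrals
  have cE : Continuous (fun y => ∫ x in (0:ℝ)..L, u x y * u x y) := by
    have cswap : Continuous fun p : ℝ × ℝ => u p.2 p.1 := cF.comp continuous_swap
    exact intervalIntegral.continuous_parametric_intervalIntegral_of_continuous'
      (f := fun y x => u x y * u x y) (by exact cswap.mul cswap) 0 L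
  have cR : Continuous (fun y => ∫ x in (0:ℝ)..L, (∫ s in x..L, u s y) * PY (PY F) (x, y)) := by
    have cVswap : Continuous fun p : ℝ × ℝ => (∫ s in p.2..L, u s p.1) :=
      cont_prim_gen cF L continuous_snd continuous_fst
    have cQswap : Continuous fun p : ℝ × ℝ => PY (PY F) (p.2, p.1) := cQ2.comp continuous_swap
    exact intervalIntegral.continuous_parametric_intervalIntegral_of_continuous'
      (f := fun y x => (∫ s in x..L, u s y) * PY (PY F) (x, y))
      (by exact cVswap.mul cQswap) 0 L
  -- the combined identity holds on the closed interval by continuity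
  have hAIcc : ∀ y ∈ Set.Icc (0:ℝ) L,
      lam * (∫ x in (0:ℝ)..L, u x y * u x y)
        + (∫ x in (0:ℝ)..L, (∫ s in x..L, u s y) * PY (PY F) (x, y)) = 0 := by
    apply extend_zero ((continuous_const.mul cE).add cR) hL
    intro y hy
    have h1 := IdA y hy
    have h2 := IdB y (Set.Ioo_subset_Icc_self hy)
    show lam * (∫ x in (0:ℝ)..L, u x y * u x y)
      + (∫ x in (0:ℝ)..L, (∫ s in x..L, u s y) * PY (PY F) (x, y)) = 0
    linarith
  -- integrate in y
  have hyint : lam * (∫ y in (0:ℝ)..L, ∫ x in (0:ℝ)..L, u x y * u x y)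
      + (∫ y in (0:ℝ)..L, ∫ x in (0:ℝ)..L, (∫ s in x..L, u s y) * PY (PY F) (x, y)) = 0 := by
    have hz : (∫ y in (0:ℝ)..L, (lam * (∫ x in (0:ℝ)..L, u x y * u x y)
        + (∫ x in (0:ℝ)..L, (∫ s in x..L, u s y) * PY (PY F) (x, y)))) = 0 := by
      have hcongr : (∫ y in (0:ℝ)..L, (lam * (∫ x in (0:ℝ)..L, u x y * u x y)
          + (∫ x in (0:ℝ)..L, (∫ s in x..L, u s y) * PY (PY F) (x, y))))
          = ∫ y in (0:ℝ)..L, (0:ℝ) :=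
        intervalIntegral.integral_congr fun y hy =>
          hAIcc y (by rwa [Set.uIcc_of_le hL.le] at hy)
      simpa using hcongr
    have j1 : IntervalIntegrable (fun y => lam * (∫ x in (0:ℝ)..L, u x y * u x y))
        volume 0 L := Continuous.intervalIntegrable (continuous_const.mul cE) 0 L
    have j2 : IntervalIntegrable
        (fun y => ∫ x in (0:ℝ)..L, (∫ s in x..L, u s y) * PY (PY F) (x, y))
        volume 0 L := Continuous.intervalIntegrable cR 0 L
    rw [intervalIntegral.integral_add j1 j2, intervalIntegral.integral_const_mul] at hz
    linarith
  -- the double integral of V * u_yy vanishes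
  have hT : (∫ y in (0:ℝ)..L, ∫ x in (0:ℝ)..L, (∫ s in x..L, u s y) * PY (PY F) (x, y)) = 0 := by
    rw [← swap_integral_cont'
      (f := fun x y => (∫ s in x..L, u s y) * PY (PY F) (x, y)) (by exact cV.mul cQ2) 0 L 0 L]
    have inner : ∀ x ∈ Set.Icc (0:ℝ) L,
        (∫ t in (0:ℝ)..L, (∫ s in x..L, u s t) * PY (PY F) (x, t))
          = -∫ t in (0:ℝ)..L, (∫ s in x..L, PY F (s, t)) * PY F (x, t) := by
      intro x hx
      have hTheta : ∀ t ∈ Set.uIcc (0:ℝ) L, HasDerivAt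
          (fun t' => (∫ s in x..L, u s t') * PY F (x, t'))
          ((∫ s in x..L, PY F (s, t)) * PY F (x, t)
            + (∫ s in x..L, u s t) * PY (PY F) (x, t)) t := by
        intro t _
        exact (hasDerivAt_param cF cQ1 (fun s t' => dQ1 s t') x L 0 t).mul (dQ2 x t)
      have cwy : Continuous fun t : ℝ => (∫ s in x..L, PY F (s, t)) :=
        intervalIntegral.continuous_parametric_intervalIntegral_of_continuous'
          (f := fun t s => PY F (s, t)) (by exact cQ1.comp continuous_swap) x L
      have cVy : Continuous fun t : ℝ => (∫ s in x..L, u s t) :=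
        intervalIntegral.continuous_parametric_intervalIntegral_of_continuous'
          (f := fun t s => u s t) (by exact cF.comp continuous_swap) x L
      have cq1y : Continuous fun t : ℝ => PY F (x, t) :=
        cQ1.comp (continuous_const.prodMk continuous_id)
      have cq2y : Continuous fun t : ℝ => PY (PY F) (x, t) :=
        cQ2.comp (continuous_const.prodMk continuous_id)
      have hFTC := intervalIntegral.integral_eq_sub_of_hasDerivAt hTheta
        (Continuous.intervalIntegrable ((cwy.mul cq1y).add (cVy.mul cq2y)) 0 L)
      beta_reduce at hFTC
      obtain ⟨_, hq2, hq3⟩ := hby' x hx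
      rw [hq2, hq3] at hFTC
      simp only [mul_zero, sub_zero, zero_sub, neg_zero, sub_self] at hFTC
      have iw : IntervalIntegrable
          (fun t => (∫ s in x..L, PY F (s, t)) * PY F (x, t)) volume 0 L :=
        Continuous.intervalIntegrable (cwy.mul cq1y) 0 L
      have iv : IntervalIntegrable
          (fun t => (∫ s in x..L, u s t) * PY (PY F) (x, t)) volume 0 L :=
        Continuous.intervalIntegrable (cVy.mul cq2y) 0 L
      rw [intervalIntegral.integral_add iw iv] at hFTC
      linarith
    have houter : (∫ x in (0:ℝ)..L, ∫ t in (0:ℝ)..L,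
        (∫ s in x..L, u s t) * PY (PY F) (x, t))
        = ∫ x in (0:ℝ)..L, -(∫ t in (0:ℝ)..L, (∫ s in x..L, PY F (s, t)) * PY F (x, t)) :=
      intervalIntegral.integral_congr fun x hx =>
        inner x (by rwa [Set.uIcc_of_le hL.le] at hx)
    rw [houter, intervalIntegral.integral_neg, neg_eq_zero,
      swap_integral_cont'
        (f := fun x t => (∫ s in x..L, PY F (s, t)) * PY F (x, t)) (by exact cw.mul cQ1) 0 L 0 L]
    have inner2 : ∀ t ∈ Set.Icc (0:ℝ) L,
        (∫ x in (0:ℝ)..L, (∫ s in x..L, PY F (s, t)) * PY F (x, t)) = 0 := by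
      intro t ht
      have hXi : ∀ x ∈ Set.uIcc (0:ℝ) L, HasDerivAt
          (fun x' => -((∫ s in x'..L, PY F (s, t)) * (∫ s in x'..L, PY F (s, t)))/2)
          ((∫ s in x..L, PY F (s, t)) * PY F (x, t)) x := by
        intro x _
        have h1 := hasDerivAt_prim cQ1 L x t
        have hcomb := ((h1.mul h1).neg).div_const 2
        exact hcomb.congr_deriv (by ring)
      have cwx : Continuous fun x : ℝ => (∫ s in x..L, PY F (s, t)) :=
        cont_prim_slice cQ1 L t
      have cq1x : Continuous fun x : ℝ => PY F (x, t) :=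
        cQ1.comp (continuous_id.prodMk continuous_const)
      have hFTC := intervalIntegral.integral_eq_sub_of_hasDerivAt hXi
        (Continuous.intervalIntegrable (cwx.mul cq1x) 0 L)
      beta_reduce at hFTC
      rw [intervalIntegral.integral_same, hint' t ht] at hFTC
      simpa using hFTC
    have hcongr2 : (∫ t in (0:ℝ)..L, ∫ x in (0:ℝ)..L,
        (∫ s in x..L, PY F (s, t)) * PY F (x, t)) = ∫ t in (0:ℝ)..L, (0:ℝ) :=
      intervalIntegral.integral_congr fun t ht =>
        inner2 t (by rwa [Set.uIcc_of_le hL.le] at ht)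
    simpa using hcongr2
  -- conclude that the double integral of u² vanishes
  have hEE : (∫ y in (0:ℝ)..L, ∫ x in (0:ℝ)..L, u x y * u x y) = 0 := by
    have h1 : lam * (∫ y in (0:ℝ)..L, ∫ x in (0:ℝ)..L, u x y * u x y) = 0 := by
      rw [hT] at hyint; linarith
    exact (mul_eq_zero.mp h1).resolve_left hlam
  have hEy : ∀ y ∈ Set.Icc (0:ℝ) L, (∫ x in (0:ℝ)..L, u x y * u x y) = 0 :=
    zero_of_integral_zero cE
      (fun y => intervalIntegral.integral_nonneg hL.le fun x _ => mul_self_nonneg _) hL hEE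
  intro x hx y hy
  have hfin := zero_of_integral_zero (f := fun x => u x y * u x y)
    ((csliceU y).mul (csliceU y)) (fun x => mul_self_nonneg _) hL (hEy y hy) x hx
  exact mul_self_eq_zero.mp hfin




end
end

section
/- Let L > 0 and let u : [0,L]² → ℝ be of class C² with u_y(x,0) = 0 and u_y(x,L) = 0 for all x ∈ [0,L]. Then ∫_Ω u(x,y) · (∂ₓ⁻¹ u_yy)(x,y) dx dy = ½ ∫₀^L ((∂ₓ⁻¹ u_y)(0,y))² dy. -/
set_option maxHeartbeats 1000000


open MeasureTheory Real

noncomputable section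

/-- Fubini for iterated interval integrals of a jointly continuous function,
with sorted bounds. -/
lemma swapContAux {F : ℝ → ℝ → ℝ} (hF : Continuous fun p : ℝ × ℝ => F p.1 p.2)
    {a b c d : ℝ} (hab : a ≤ b) (hcd : c ≤ d) :
    ∫ s in a..b, ∫ t in c..d, F s t = ∫ t in c..d, ∫ s in a..b, F s t := by
  rw [intervalIntegral.integral_of_le hab, intervalIntegral.integral_of_le hcd]
  simp_rw [intervalIntegral.integral_of_le hcd, intervalIntegral.integral_of_le hab]
  apply MeasureTheory.integral_integral_swap
  rw [Measure.prod_restrict]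
  have h1 : IntegrableOn (Function.uncurry F) (Set.Icc a b ×ˢ Set.Icc c d) :=
    (hF : Continuous (Function.uncurry F)).continuousOn.integrableOn_compact
      (isCompact_Icc.prod isCompact_Icc)
  exact h1.mono_set (Set.prod_mono Set.Ioc_subset_Icc_self Set.Ioc_subset_Icc_self)

/-- Fubini for iterated interval integrals of a jointly continuous function. -/
lemma swapCont {F : ℝ → ℝ → ℝ} (hF : Continuous fun p : ℝ × ℝ => F p.1 p.2)
    {a b : ℝ} (hab : a ≤ b) (c d : ℝ) :
    ∫ s in a..b, ∫ t in c..d, F s t = ∫ t in c..d, ∫ s in a..b, F s t := by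
  rcases le_total c d with h | h
  · exact swapContAux hF hab h
  · simp_rw [intervalIntegral.integral_symm d c]
    rw [intervalIntegral.integral_neg, neg_inj]
    exact swapContAux hF hab h

/-- Joint continuity of the nonlocal operator applied to a continuous function. -/
lemma pxInv_continuous (L : ℝ) {w : ℝ → ℝ → ℝ} (hw : Continuous fun p : ℝ × ℝ => w p.1 p.2) :
    Continuous fun p : ℝ × ℝ => pxInv L w p.1 p.2 := by
  have hi : ∀ (y a b : ℝ), IntervalIntegrable (fun s => w s y) volume a b := fun y a b =>
    (hw.comp (continuous_id.prodMk continuous_const)).intervalIntegrable a b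
  have h1 : ∀ x y : ℝ, pxInv L w x y
      = (∫ s in (0:ℝ)..x, w s y) - ∫ s in (0:ℝ)..L, w s y := by
    intro x y
    unfold pxInv
    rw [← intervalIntegral.integral_add_adjacent_intervals (hi y x 0) (hi y 0 L),
      intervalIntegral.integral_symm 0 x]
    ring
  have e : (fun p : ℝ × ℝ => pxInv L w p.1 p.2)
      = fun p : ℝ × ℝ => (∫ s in (0:ℝ)..p.1, w s p.2) - ∫ s in (0:ℝ)..L, w s p.2 :=
    funext fun p => h1 p.1 p.2
  rw [e]
  have hsw : Continuous (Function.uncurry fun (y s : ℝ) => w s y) := hw.comp continuous_swap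
  have c1 : Continuous fun q : ℝ × ℝ => ∫ t in (0:ℝ)..q.2, w t q.1 :=
    intervalIntegral.continuous_parametric_primitive_of_continuous hsw
  have c2 : Continuous fun y : ℝ => ∫ s in (0:ℝ)..L, w s y :=
    intervalIntegral.continuous_parametric_intervalIntegral_of_continuous' hsw 0 L
  exact (c1.comp (continuous_snd.prodMk continuous_fst)).sub (c2.comp continuous_snd)

/-- FTC helper: derivative of a primitive of a continuous function. -/
lemma primitive_hasDerivAt {g : ℝ → ℝ} (hg : Continuous g) (y : ℝ) :
    HasDerivAt (fun y' => ∫ t in (0:ℝ)..y', g t) (g y) y :=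
  intervalIntegral.integral_hasDerivAt_right (hg.intervalIntegrable 0 y)
    hg.stronglyMeasurable.stronglyMeasurableAtFilter hg.continuousAt

/-- FTC helper: derivative in the lower endpoint. -/
lemma lower_hasDerivAt {g : ℝ → ℝ} (hg : Continuous g) (x L : ℝ) :
    HasDerivAt (fun x' => -(∫ s in x'..L, g s)) (g x) x := by
  have h := (intervalIntegral.integral_hasDerivAt_left (hg.intervalIntegrable x L)
    hg.stronglyMeasurable.stronglyMeasurableAtFilter hg.continuousAt).neg
  simp only [neg_neg] at h
  exact h

/-- Integral identity for the nonlocal term in the spectral problem: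
if `u` is `C²` with `u_y(x,0) = u_y(x,L) = 0`, then
`∫_Ω u (∂ₓ⁻¹ u_yy) dx dy = ½ ∫₀^L ((∂ₓ⁻¹ u_y)(0,y))² dy`. -/
theorem kp_spectral_nonlocal_identity (L : ℝ) (hL : 0 < L)
    (u : ℝ → ℝ → ℝ) (hu : ContDiff ℝ 2 (fun p : ℝ × ℝ => u p.1 p.2))
    (hby : ∀ x ∈ Set.Icc (0:ℝ) L, pdy u x 0 = 0 ∧ pdy u x L = 0) :
    (∫ x in (0:ℝ)..L, ∫ y in (0:ℝ)..L, u x y * pxInv L (pdy2 u) x y)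
      = (1/2) * ∫ y in (0:ℝ)..L, (pxInv L (pdy u) 0 y)^2 := by
  set f : ℝ × ℝ → ℝ := fun p => u p.1 p.2 with hfdef
  have hud : Differentiable ℝ f := hu.differentiable (by norm_num)
  -- first y-derivative
  have key1 : ∀ x y : ℝ, HasDerivAt (fun y' => u x y') (fderiv ℝ f (x, y) (0, 1)) y := by
    intro x y
    have h1 : HasDerivAt (fun y' : ℝ => ((x, y') : ℝ × ℝ)) ((0 : ℝ), (1 : ℝ)) y :=
      HasDerivAt.prodMk (hasDerivAt_const y x) (hasDerivAt_id y)
    exact (hud (x, y)).hasFDerivAt.comp_hasDerivAt y h1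
  have hpdy_eq : ∀ x y : ℝ, pdy u x y = fderiv ℝ f (x, y) (0, 1) := fun x y => (key1 x y).deriv
  have hdy : ∀ x y : ℝ, HasDerivAt (fun y' => u x y') (pdy u x y) y := by
    intro x y; rw [hpdy_eq]; exact key1 x y
  set G : ℝ × ℝ → ℝ := fun p => fderiv ℝ f p (0, 1) with hGdef
  have hG : ContDiff ℝ 1 G := (hu.fderiv_right (by norm_num)).clm_apply contDiff_const
  have hpdyc : Continuous fun p : ℝ × ℝ => pdy u p.1 p.2 := by
    have e : (fun p : ℝ × ℝ => pdy u p.1 p.2) = G := funext fun p => hpdy_eq p.1 p.2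
    rw [e]; exact hG.continuous
  -- second y-derivative
  have hGd : Differentiable ℝ G := hG.differentiable (by norm_num)
  have key2 : ∀ x y : ℝ, HasDerivAt (fun y' => G (x, y')) (fderiv ℝ G (x, y) (0, 1)) y := by
    intro x y
    have h1 : HasDerivAt (fun y' : ℝ => ((x, y') : ℝ × ℝ)) ((0 : ℝ), (1 : ℝ)) y :=
      HasDerivAt.prodMk (hasDerivAt_const y x) (hasDerivAt_id y)
    exact (hGd (x, y)).hasFDerivAt.comp_hasDerivAt y h1
  have hpdy2_eq : ∀ x y : ℝ, pdy2 u x y = fderiv ℝ G (x, y) (0, 1) := by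
    intro x y
    show iteratedDeriv 2 (fun y' => u x y') y = _
    rw [iteratedDeriv_succ, iteratedDeriv_one]
    have e2 : deriv (fun y' => u x y') = fun y' => G (x, y') :=
      funext fun y' => (key1 x y').deriv
    rw [e2]
    exact (key2 x y).deriv
  have hdy2 : ∀ x y : ℝ, HasDerivAt (fun y' => pdy u x y') (pdy2 u x y) y := by
    intro x y
    have e : (fun y' => pdy u x y') = fun y' => G (x, y') := funext fun y' => hpdy_eq x y'
    rw [hpdy2_eq, e]
    exact key2 x y
  have hpdy2c : Continuous fun p : ℝ × ℝ => pdy2 u p.1 p.2 := by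
    have e : (fun p : ℝ × ℝ => pdy2 u p.1 p.2) = fun p : ℝ × ℝ => fderiv ℝ G p (0, 1) :=
      funext fun p => hpdy2_eq p.1 p.2
    rw [e]
    exact (hG.continuous_fderiv one_ne_zero).clm_apply continuous_const
  -- nonlocal operators
  have hWc : Continuous fun p : ℝ × ℝ => pxInv L (pdy u) p.1 p.2 := pxInv_continuous L hpdyc
  have hVc : Continuous fun p : ℝ × ℝ => pxInv L (pdy2 u) p.1 p.2 := pxInv_continuous L hpdy2c
  -- x-derivative of W
  have hWx : ∀ y x : ℝ, HasDerivAt (fun x' => pxInv L (pdy u) x' y) (pdy u x y) x := by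
    intro y x
    have hc : Continuous fun s => pdy u s y :=
      hpdyc.comp (continuous_id.prodMk continuous_const)
    exact lower_hasDerivAt hc x L
  -- boundary values of W
  have hW0 : ∀ x ∈ Set.Icc (0:ℝ) L, pxInv L (pdy u) x 0 = 0 ∧ pxInv L (pdy u) x L = 0 := by
    intro x hx
    have hsub : Set.uIcc x L ⊆ Set.Icc 0 L := by
      rw [Set.uIcc_of_le hx.2]
      exact Set.Icc_subset_Icc hx.1 le_rfl
    constructor
    · have : Set.EqOn (fun s => pdy u s 0) (fun _ => (0:ℝ)) (Set.uIcc x L) := fun s hs =>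
        (hby s (hsub hs)).1
      simp [pxInv, intervalIntegral.integral_congr this]
    · have : Set.EqOn (fun s => pdy u s L) (fun _ => (0:ℝ)) (Set.uIcc x L) := fun s hs =>
        (hby s (hsub hs)).2
      simp [pxInv, intervalIntegral.integral_congr this]
  -- W as a primitive of V in the y-variable
  have hWid : ∀ x ∈ Set.Icc (0:ℝ) L, ∀ y : ℝ,
      pxInv L (pdy u) x y = ∫ t in (0:ℝ)..y, pxInv L (pdy2 u) x t := by
    intro x hx y
    have hsub : Set.uIcc x L ⊆ Set.Icc 0 L := by
      rw [Set.uIcc_of_le hx.2]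
      exact Set.Icc_subset_Icc hx.1 le_rfl
    have h1 : Set.EqOn (fun s => pdy u s y)
        (fun s => ∫ t in (0:ℝ)..y, pdy2 u s t) (Set.uIcc x L) := by
      intro s hs
      have hint := intervalIntegral.integral_eq_sub_of_hasDerivAt
        (f := fun t => pdy u s t) (f' := fun t => pdy2 u s t) (a := 0) (b := y)
        (fun t _ => hdy2 s t)
        ((hpdy2c.comp (continuous_const.prodMk continuous_id)).intervalIntegrable 0 y)
      have h0 := (hby s (hsub hs)).1
      simp only [h0, sub_zero] at hint
      exact hint.symm
    show -(∫ s in x..L, pdy u s y) = _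
    rw [intervalIntegral.integral_congr h1, swapCont hpdy2c hx.2 0 y,
      ← intervalIntegral.integral_neg]
    unfold pxInv
    rfl
  -- y-derivative of W
  have hWy : ∀ x ∈ Set.Icc (0:ℝ) L, ∀ y : ℝ,
      HasDerivAt (fun y' => pxInv L (pdy u) x y') (pxInv L (pdy2 u) x y) y := by
    intro x hx y
    have hc : Continuous fun t : ℝ => pxInv L (pdy2 u) x t := by
      have h2 : (fun t : ℝ => pxInv L (pdy2 u) x t)
          = (fun p : ℝ × ℝ => pxInv L (pdy2 u) p.1 p.2) ∘ (fun t : ℝ => (x, t)) := rfl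
      rw [h2]
      exact hVc.comp (continuous_const.prodMk continuous_id)
    have hD : HasDerivAt (fun y' => ∫ t in (0:ℝ)..y', pxInv L (pdy2 u) x t)
        (pxInv L (pdy2 u) x y) y := primitive_hasDerivAt hc y
    have e : (fun y' => pxInv L (pdy u) x y')
        = fun y' => ∫ t in (0:ℝ)..y', pxInv L (pdy2 u) x t := funext (hWid x hx)
    rw [e]
    exact hD
  -- Step 1 : integration by parts in y
  have step1 : ∀ x ∈ Set.uIcc (0:ℝ) L,
      (∫ y in (0:ℝ)..L, u x y * pxInv L (pdy2 u) x y)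
        = (fun x => -∫ y in (0:ℝ)..L, pdy u x y * pxInv L (pdy u) x y) x := by
    intro x hx
    rw [Set.uIcc_of_le hL.le] at hx
    have hVx : Continuous fun t : ℝ => pxInv L (pdy2 u) x t := by
      have h2 : (fun t : ℝ => pxInv L (pdy2 u) x t)
          = (fun p : ℝ × ℝ => pxInv L (pdy2 u) p.1 p.2) ∘ (fun t : ℝ => (x, t)) := rfl
      rw [h2]
      exact hVc.comp (continuous_const.prodMk continuous_id)
    have hIBP := intervalIntegral.integral_mul_deriv_eq_deriv_mul (a := (0:ℝ)) (b := L)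
      (u := fun y => u x y) (u' := fun y => pdy u x y)
      (v := fun y => pxInv L (pdy u) x y) (v' := fun y => pxInv L (pdy2 u) x y)
      (fun y _ => hdy x y) (fun y _ => hWy x hx y)
      ((hpdyc.comp (continuous_const.prodMk continuous_id)).intervalIntegrable 0 L)
      (hVx.intervalIntegrable 0 L)
    rw [hIBP]
    simp only [(hW0 x hx).1, (hW0 x hx).2]
    ring
  -- Step 4 : FTC in x
  have step4 : ∀ y : ℝ,
      (∫ x in (0:ℝ)..L, pdy u x y * pxInv L (pdy u) x y)
        = -((pxInv L (pdy u) 0 y)^2 / 2) := by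
    intro y
    have hder : ∀ x ∈ Set.uIcc (0:ℝ) L,
        HasDerivAt (fun x' => (pxInv L (pdy u) x' y)^2 / 2)
          (pdy u x y * pxInv L (pdy u) x y) x := by
      intro x _
      have h := ((hWx y x).pow 2).div_const 2
      refine h.congr_deriv ?_
      push_cast
      ring
    have hWs : Continuous fun x : ℝ => pxInv L (pdy u) x y := by
      have h2 : (fun x : ℝ => pxInv L (pdy u) x y)
          = (fun p : ℝ × ℝ => pxInv L (pdy u) p.1 p.2) ∘ (fun x : ℝ => (x, y)) := rfl
      rw [h2]
      exact hWc.comp (continuous_id.prodMk continuous_const)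
    have hcont : Continuous fun x => pdy u x y * pxInv L (pdy u) x y :=
      (hpdyc.comp (continuous_id.prodMk continuous_const)).mul hWs
    rw [intervalIntegral.integral_eq_sub_of_hasDerivAt hder (hcont.intervalIntegrable 0 L)]
    have hWL : pxInv L (pdy u) L y = 0 := by simp [pxInv]
    rw [hWL]
    ring
  -- Assemble
  calc (∫ x in (0:ℝ)..L, ∫ y in (0:ℝ)..L, u x y * pxInv L (pdy2 u) x y)
      = ∫ x in (0:ℝ)..L, -∫ y in (0:ℝ)..L, pdy u x y * pxInv L (pdy u) x y :=
        intervalIntegral.integral_congr step1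
    _ = -∫ x in (0:ℝ)..L, ∫ y in (0:ℝ)..L, pdy u x y * pxInv L (pdy u) x y :=
        intervalIntegral.integral_neg
    _ = -∫ y in (0:ℝ)..L, ∫ x in (0:ℝ)..L, pdy u x y * pxInv L (pdy u) x y := by
        rw [swapCont (hpdyc.mul hWc) hL.le 0 L]
    _ = -∫ y in (0:ℝ)..L, -((pxInv L (pdy u) 0 y)^2 / 2) := by
        rw [intervalIntegral.integral_congr (fun y _ => step4 y)]
    _ = (1/2) * ∫ y in (0:ℝ)..L, (pxInv L (pdy u) 0 y)^2 := by
        rw [intervalIntegral.integral_neg, neg_neg]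
        rw [show (fun y => (pxInv L (pdy u) 0 y)^2 / 2)
          = fun y => (1/2 : ℝ) * (pxInv L (pdy u) 0 y)^2 from funext fun y => by ring]
        rw [intervalIntegral.integral_const_mul]

end
end
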